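/- arXiv:math/0006056 — 3 statements merged into one kernel-verified Lean document; each statement's English description precedes it below -/
import Mathlib

section
/- As an abelian group, A_m is free of rank 4m+1, with basis the images of the 4m+1 paths (0), (1), …, (m), (0|1), …, (m−1|m), (1|0), …, (m|m−1), (1|0|1), …, (m|m−1|m). Moreover, with respect to the grading of A_m determined by deg(i) = deg(i|i+1) = 0 and deg(i+1|i) = 1, the homogeneous component of degree 0 is free abelian of rank 2m+1 with basis (0),…,(m),(0|1),…,(m−1|m), the component of degree 1 is free abelian of rank 2m with basis (1|0),…,(m|m−1),(1|0|1),…,(m|m−1|m), and all components of degree ≥ 2 are zero. -/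
noncomputable section

open scoped TensorProduct

/-- Generators for the path ring of the quiver `Γ_m`: vertex idempotents `e i`
(the length-zero paths `(i)`), and the arrows `u i = (i|i+1)` and `d i = (i+1|i)`. -/
inductive AmGen : Type
  | e : ℕ → AmGen
  | u : ℕ → AmGen
  | d : ℕ → AmGen

/-- The free ring on the generators. -/
abbrev FA : Type := FreeAlgebra ℤ AmGen

def ge (i : ℕ) : FA := FreeAlgebra.ι ℤ (AmGen.e i)
def gu (i : ℕ) : FA := FreeAlgebra.ι ℤ (AmGen.u i)
def gd (i : ℕ) : FA := FreeAlgebra.ι ℤ (AmGen.d i)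

/-- The relations presenting the ring `A_m` as a quotient of the path ring of `Γ_m`:
first the relations presenting the path ring itself (the `(i)` are orthogonal idempotents
summing to `1`, arrows compose only when endpoints match, generators with out-of-range
indices vanish), and then the defining relations of `A_m`:
`(i-1|i|i+1) = (i+1|i|i-1) = 0`, `(i|i+1|i) = (i|i-1|i)` for `0 < i < m`, and `(0|1|0) = 0`. -/
inductive AmRel (m : ℕ) : FA → FA → Prop
  | idem (i : ℕ) : AmRel m (ge i * ge i) (ge i)
  | orth (i j : ℕ) : i ≠ j → AmRel m (ge i * ge j) 0
  | sum_one : AmRel m (∑ i ∈ Finset.range (m + 1), ge i) 1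
  | e_zero (i : ℕ) : m < i → AmRel m (ge i) 0
  | u_zero (i : ℕ) : m ≤ i → AmRel m (gu i) 0
  | d_zero (i : ℕ) : m ≤ i → AmRel m (gd i) 0
  | u_src (i : ℕ) : AmRel m (ge i * gu i) (gu i)
  | u_tgt (i : ℕ) : AmRel m (gu i * ge (i + 1)) (gu i)
  | d_src (i : ℕ) : AmRel m (ge (i + 1) * gd i) (gd i)
  | d_tgt (i : ℕ) : AmRel m (gd i * ge i) (gd i)
  | uu (i : ℕ) : AmRel m (gu i * gu (i + 1)) 0
  | dd (i : ℕ) : AmRel m (gd (i + 1) * gd i) 0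
  | loops (i : ℕ) : i + 1 < m → AmRel m (gu (i + 1) * gd (i + 1)) (gd i * gu i)
  | loop0 : AmRel m (gu 0 * gd 0) 0

/-- The ring `A_m`. -/
abbrev Am (m : ℕ) : Type := RingQuot (AmRel m)

/-- Quotient map from the free ring. -/
def toAm (m : ℕ) : FA →+* Am m := RingQuot.mkRingHom (AmRel m)

/-- The image of the length-zero path `(i)` in `A_m`. -/
def eA (m i : ℕ) : Am m := toAm m (ge i)
/-- The image of the path `(i|i+1)` in `A_m`. -/
def uA (m i : ℕ) : Am m := toAm m (gu i)
/-- The image of the path `(i+1|i)` in `A_m`. -/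
def dA (m i : ℕ) : Am m := toAm m (gd i)
/-- The image of the path `(i|i-1|i)` in `A_m` (for `i ≥ 1`). -/
def loopA (m i : ℕ) : Am m := dA m (i - 1) * uA m (i - 1)

/-- The left `A_m`-module `P_i = A_m (i)`. -/
def Pmod (m i : ℕ) : Submodule (Am m) (Am m) := Submodule.span (Am m) {eA m i}

/-- The right `A_m`-module `₍i₎P = (i) A_m`. -/
def iPmod (m i : ℕ) : Submodule (Am m)ᵐᵒᵖ (Am m) := Submodule.span (Am m)ᵐᵒᵖ {eA m i}

end
noncomputable section

/-- The `4m+1` distinguished elements of `A_m`: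
`(0), …, (m)`, `(0|1), …, (m-1|m)`, `(1|0), …, (m|m-1)`, `(1|0|1), …, (m|m-1|m)`. -/
def amBasisFam (m : ℕ) : (Fin (m + 1) ⊕ Fin m ⊕ Fin m ⊕ Fin m) → Am m :=
  Sum.elim (fun i => eA m i)
    (Sum.elim (fun i => uA m i)
      (Sum.elim (fun i => dA m i) fun i => dA m i * uA m i))

/-- The degree-zero part: `(0), …, (m)` and `(0|1), …, (m-1|m)`. -/
def amDeg0Fam (m : ℕ) : (Fin (m + 1) ⊕ Fin m) → Am m :=
  Sum.elim (fun i => eA m i) fun i => uA m i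

/-- The degree-one part: `(1|0), …, (m|m-1)` and `(1|0|1), …, (m|m-1|m)`. -/
def amDeg1Fam (m : ℕ) : (Fin m ⊕ Fin m) → Am m :=
  Sum.elim (fun i => dA m i) fun i => dA m i * uA m i


noncomputable section Model

/-- Index type for the basis of the model of `A_m`. -/
abbrev Bidx (m : ℕ) : Type := Fin (m + 1) ⊕ Fin m ⊕ Fin m ⊕ Fin m

variable {m : ℕ}

def srcB : Bidx m → ℕ
  | .inl j => j
  | .inr (.inl j) => j
  | .inr (.inr (.inl j)) => j + 1
  | .inr (.inr (.inr j)) => j + 1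

def tgtB : Bidx m → ℕ
  | .inl j => j
  | .inr (.inl j) => j + 1
  | .inr (.inr (.inl j)) => j
  | .inr (.inr (.inr j)) => j + 1

def degB : Bidx m → ℕ
  | .inl _ => 0
  | .inr (.inl _) => 0
  | .inr (.inr (.inl _)) => 1
  | .inr (.inr (.inr _)) => 1

lemma srcB_le (b : Bidx m) : srcB b ≤ m := by
  rcases b with j | j | j | j <;> · have := j.isLt; simp only [srcB]; omega

lemma tgtB_le (b : Bidx m) : tgtB b ≤ m := by
  rcases b with j | j | j | j <;> · have := j.isLt; simp only [tgtB]; omega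

/-- Validity of a (source, target, degree) triple. -/
def Vp (m s t k : ℕ) : Prop :=
  s ≤ m ∧ t ≤ m ∧ ((k = 0 ∧ (t = s ∨ t = s + 1)) ∨ (k = 1 ∧ (s = t + 1 ∨ (s = t ∧ 1 ≤ s))))

instance (m s t k : ℕ) : Decidable (Vp m s t k) := by unfold Vp; infer_instance

lemma Vp_self (b : Bidx m) : Vp m (srcB b) (tgtB b) (degB b) := by
  rcases b with j | j | j | j <;>
    · have := j.isLt
      simp only [srcB, tgtB, degB]
      exact ⟨by omega, by omega, by omega⟩

lemma exists_of_Vp {s t k : ℕ} (h : Vp m s t k) :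
    ∃ b : Bidx m, srcB b = s ∧ tgtB b = t ∧ degB b = k := by
  obtain ⟨hs, ht, h | h⟩ := h
  · rcases h.2 with h2 | h2
    · exact ⟨Sum.inl ⟨s, by omega⟩, rfl, by simp [tgtB]; omega, h.1.symm⟩
    · exact ⟨Sum.inr (Sum.inl ⟨s, by omega⟩), rfl, by simp [tgtB]; omega, h.1.symm⟩
  · rcases h.2 with h2 | h2
    · exact ⟨Sum.inr (Sum.inr (Sum.inl ⟨t, by omega⟩)), by simp [srcB]; omega, rfl, h.1.symm⟩
    · refine ⟨Sum.inr (Sum.inr (Sum.inr ⟨s - 1, by omega⟩)), ?_, ?_, h.1.symm⟩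
      · simp [srcB]; omega
      · simp [tgtB]; omega

/-- The basis vector of the model corresponding to a path with source `s`,
target `t` and degree `k`, or `0` if there is no such path. -/
def trip (m s t k : ℕ) : Bidx m →₀ ℤ :=
  if hk : k = 0 then
    if h : s = t ∧ s ≤ m then Finsupp.single (Sum.inl ⟨s, by omega⟩) 1
    else if h : t = s + 1 ∧ t ≤ m then Finsupp.single (Sum.inr (Sum.inl ⟨s, by omega⟩)) 1
    else 0
  else if hk1 : k = 1 then
    if h : s = t + 1 ∧ s ≤ m then Finsupp.single (Sum.inr (Sum.inr (Sum.inl ⟨t, by omega⟩))) 1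
    else if h : s = t ∧ 1 ≤ s ∧ s ≤ m then
      Finsupp.single (Sum.inr (Sum.inr (Sum.inr ⟨s - 1, by omega⟩))) 1
    else 0
  else 0

lemma trip_congr {s t k s' t' k' : ℕ} (h1 : s = s') (h2 : t = t') (h3 : k = k') :
    trip m s t k = trip m s' t' k' := by subst h1 h2 h3; rfl

lemma trip_eq_zero {s t k : ℕ} (h : ¬ Vp m s t k) : trip m s t k = 0 := by
  unfold Vp at h
  unfold trip
  split_ifs <;> first | rfl | omega

lemma trip_self (b : Bidx m) : trip m (srcB b) (tgtB b) (degB b) = Finsupp.single b 1 := by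
  rcases b with j | j | j | j <;>
    · have := j.isLt
      simp only [srcB, tgtB, degB]
      unfold trip
      split_ifs <;> first | omega | simp_all

/-- The operator on the model given by left multiplication by the path `(s,t,k)`. -/
def Lop (m s t k : ℕ) : (Bidx m →₀ ℤ) →ₗ[ℤ] (Bidx m →₀ ℤ) :=
  Finsupp.lift _ ℤ _ (fun c => if t = srcB c then trip m s (tgtB c) (k + degB c) else 0)

lemma Lop_single (s t k : ℕ) (c : Bidx m) (n : ℤ) :
    Lop m s t k (Finsupp.single c n) =
      n • (if t = srcB c then trip m s (tgtB c) (k + degB c) else 0) := by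
  simp [Lop, Finsupp.lift_apply, Finsupp.sum_single_index]

lemma Lop_trip (s t k s' t' k' : ℕ) :
    Lop m s t k (trip m s' t' k') =
      if t = s' ∧ Vp m s' t' k' then trip m s t' (k + k') else 0 := by
  by_cases hV : Vp m s' t' k'
  · obtain ⟨b, hb1, hb2, hb3⟩ := exists_of_Vp hV
    subst hb1; subst hb2; subst hb3
    rw [trip_self, Lop_single, one_smul]
    simp only [Vp_self, and_true]
  · rw [trip_eq_zero hV, map_zero, if_neg (by tauto)]

end Model


noncomputable section Aux

open Finsupp

variable {m : ℕ}

lemma endExt {f g : Module.End ℤ (Bidx m →₀ ℤ)}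
    (h : ∀ c : Bidx m, f (Finsupp.single c 1) = g (Finsupp.single c 1)) : f = g := by
  apply Finsupp.lhom_ext (M := ℤ)
  intro a b
  have hb : (Finsupp.single a b : Bidx m →₀ ℤ) = b • Finsupp.single a 1 := by
    rw [Finsupp.smul_single, smul_eq_mul, mul_one]
  rw [hb, map_smul, map_smul, h]

/-- Images of the generators in the model endomorphism ring. -/
def genOp (m : ℕ) : AmGen → Module.End ℤ (Bidx m →₀ ℤ)
  | .e i => Lop m i i 0
  | .u i => Lop m i (i + 1) 0
  | .d i => Lop m (i + 1) i 1

/-- The representation of the free algebra on the model. -/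
def phi (m : ℕ) : FA →ₐ[ℤ] Module.End ℤ (Bidx m →₀ ℤ) := FreeAlgebra.lift ℤ (genOp m)

lemma phi_ge (i : ℕ) : phi m (ge i) = Lop m i i 0 := by
  simp [phi, ge, genOp]

lemma phi_gu (i : ℕ) : phi m (gu i) = Lop m i (i + 1) 0 := by
  simp [phi, gu, genOp]

lemma phi_gd (i : ℕ) : phi m (gd i) = Lop m (i + 1) i 1 := by
  simp [phi, gd, genOp]

lemma phi_rel : ∀ ⦃x y : FA⦄, AmRel m x y → phi m x = phi m y := by
  intro x y h
  induction h with
  | sum_one =>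
      rw [map_sum, map_one]
      apply endExt
      intro c
      rw [LinearMap.sum_apply]
      have hterm : ∀ j ∈ Finset.range (m + 1), (phi m (ge j)) (Finsupp.single c 1) =
          if srcB c = j then trip m (srcB c) (tgtB c) (degB c) else 0 := by
        intro j _
        rw [phi_ge, Lop_single, one_smul]
        by_cases hj : srcB c = j
        · rw [if_pos hj.symm, if_pos hj]
          exact trip_congr hj.symm rfl (by omega)
        · rw [if_neg (fun hh => hj hh.symm), if_neg hj]
      rw [Finset.sum_congr rfl hterm, Finset.sum_ite_eq (Finset.range (m + 1)) (srcB c)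
        (fun _ => trip m (srcB c) (tgtB c) (degB c)),
        if_pos (Finset.mem_range.mpr (by have := srcB_le c; omega)), trip_self]
      rfl
  | _ =>
      first
      | (simp only [map_mul, map_zero, phi_ge, phi_gu, phi_gd]
         apply endExt
         intro c
         have h1 := srcB_le c
         have h2 := tgtB_le c
         have h3 := Vp_self c
         simp only [Vp] at h3
         simp only [Module.End.mul_apply, LinearMap.zero_apply, Lop_single, one_smul,
           apply_ite, map_zero, Lop_trip, Vp, true_and, and_true]
         split_ifs <;>
           first
             | rfl
             | omega
             | (apply trip_congr <;> omega)
             | (apply trip_eq_zero; simp only [Vp]; omega)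
             | (symm; apply trip_eq_zero; simp only [Vp]; omega)
             | exact if_neg ‹_›
             | (refine (if_pos ‹_›).trans ?_
                first
                  | rfl
                  | (apply trip_congr <;> omega)
                  | (apply trip_eq_zero; simp only [Vp]; omega)
                  | (symm; apply trip_eq_zero; simp only [Vp]; omega)))
      | (simp only [map_zero, phi_ge, phi_gu, phi_gd]
         apply endExt
         intro c
         have h1 := srcB_le c
         have h2 := tgtB_le c
         have h3 := Vp_self c
         simp only [Vp] at h3
         simp only [LinearMap.zero_apply, Lop_single, one_smul]
         split_ifs <;>
           first
             | rfl
             | omega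
             | (apply trip_eq_zero; simp only [Vp]; omega))

/-- The representation of `A_m` on the model. -/
def psi (m : ℕ) : Am m →ₐ[ℤ] Module.End ℤ (Bidx m →₀ ℤ) :=
  RingQuot.liftAlgHom ℤ ⟨phi m, phi_rel⟩

lemma psi_toAm (x : FA) : psi m (toAm m x) = phi m x := by
  have : toAm m x = RingQuot.mkAlgHom ℤ (AmRel m) x := by
    rw [toAm, ← RingQuot.mkAlgHom_coe ℤ (AmRel m)]; rfl
  rw [this, psi, RingQuot.liftAlgHom_mkAlgHom_apply]

lemma psi_e (i : ℕ) : psi m (eA m i) = Lop m i i 0 := by rw [eA, psi_toAm, phi_ge]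
lemma psi_u (i : ℕ) : psi m (uA m i) = Lop m i (i + 1) 0 := by rw [uA, psi_toAm, phi_gu]
lemma psi_d (i : ℕ) : psi m (dA m i) = Lop m (i + 1) i 1 := by rw [dA, psi_toAm, phi_gd]

/-- The sum of the idempotent basis vectors of the model. -/
def vv (m : ℕ) : Bidx m →₀ ℤ := ∑ j : Fin (m + 1), Finsupp.single (Sum.inl j) 1

lemma Lop_vv (s t k : ℕ) (ht : t ≤ m) : Lop m s t k (vv m) = trip m s t k := by
  rw [vv, map_sum]
  have hterm : ∀ j ∈ Finset.univ, (Lop m s t k) (Finsupp.single (Sum.inl j : Bidx m) 1) =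
      if (⟨t, by omega⟩ : Fin (m + 1)) = j then trip m s t k else 0 := by
    intro j _
    rw [Lop_single, one_smul]
    by_cases hj : (⟨t, by omega⟩ : Fin (m + 1)) = j
    · rw [if_pos hj]
      have hjt : (j : ℕ) = t := by rw [← hj]
      rw [if_pos (show t = srcB (Sum.inl j) from hjt.symm)]
      exact trip_congr rfl hjt rfl
    · rw [if_neg hj, if_neg]
      intro hh
      exact hj (Fin.ext hh)
  rw [Finset.sum_congr rfl hterm, Finset.sum_ite_eq Finset.univ
    (⟨t, by omega⟩ : Fin (m + 1)) (fun _ => trip m s t k), if_pos (Finset.mem_univ _)]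

/-- The linear functional-valued map used to prove linear independence. -/
def Phi (m : ℕ) : Am m →ₗ[ℤ] (Bidx m →₀ ℤ) :=
  (LinearMap.applyₗ (vv m)).comp (psi m).toLinearMap

lemma Phi_apply (a : Am m) : Phi m a = psi m a (vv m) := rfl

lemma Phi_basis (b : Bidx m) : Phi m (amBasisFam m b) = Finsupp.single b 1 := by
  rcases b with j | j | j | j
  · rw [show amBasisFam m (Sum.inl j) = eA m j from rfl, Phi_apply, psi_e,
      Lop_vv _ _ _ (by have := j.isLt; omega)]
    exact trip_self (Sum.inl j)
  · rw [show amBasisFam m (Sum.inr (Sum.inl j)) = uA m j from rfl, Phi_apply, psi_u,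
      Lop_vv _ _ _ (by have := j.isLt; omega)]
    exact trip_self (Sum.inr (Sum.inl j))
  · rw [show amBasisFam m (Sum.inr (Sum.inr (Sum.inl j))) = dA m j from rfl, Phi_apply, psi_d,
      Lop_vv _ _ _ (by have := j.isLt; omega)]
    exact trip_self (Sum.inr (Sum.inr (Sum.inl j)))
  · have hj := j.isLt
    rw [show amBasisFam m (Sum.inr (Sum.inr (Sum.inr j))) = dA m j * uA m j from rfl, Phi_apply,
      map_mul, Module.End.mul_apply, psi_u, psi_d, Lop_vv _ _ _ (by omega), Lop_trip,
      if_pos ⟨rfl, ⟨by omega, by omega, by omega⟩⟩]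
    exact trip_self (Sum.inr (Sum.inr (Sum.inr j)))

lemma indep_basisFam : LinearIndependent ℤ (amBasisFam m) := by
  apply LinearIndependent.of_comp (Phi m)
  have : ⇑(Phi m) ∘ amBasisFam m = fun b : Bidx m => Finsupp.single b 1 :=
    funext fun b => Phi_basis b
  rw [this, ← Finsupp.coe_basisSingleOne]
  exact (Finsupp.basisSingleOne (R := ℤ) (ι := Bidx m)).linearIndependent

lemma elim_eq_comp : Sum.elim (amDeg0Fam m) (amDeg1Fam m) =
    amBasisFam m ∘ (Equiv.sumAssoc (Fin (m + 1)) (Fin m) (Fin m ⊕ Fin m)) := by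
  funext b
  rcases b with (j | j) | (j | j) <;> rfl

lemma indep_sum : LinearIndependent ℤ (Sum.elim (amDeg0Fam m) (amDeg1Fam m)) := by
  rw [elim_eq_comp]
  exact indep_basisFam.comp _ (Equiv.injective _)

/- ### Product identities in `A_m` -/

lemma mkr {a b : FA} (h : AmRel m a b) : toAm m a = toAm m b := RingQuot.mkRingHom_rel h

lemma eA_oob {i : ℕ} (h : m < i) : eA m i = 0 := by
  simpa only [eA, map_zero] using mkr (m := m) (AmRel.e_zero i h)

lemma uA_oob {i : ℕ} (h : m ≤ i) : uA m i = 0 := by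
  simpa only [uA, map_zero] using mkr (m := m) (AmRel.u_zero i h)

lemma dA_oob {i : ℕ} (h : m ≤ i) : dA m i = 0 := by
  simpa only [dA, map_zero] using mkr (m := m) (AmRel.d_zero i h)

lemma one_eq_sum : (1 : Am m) = ∑ i ∈ Finset.range (m + 1), eA m i := by
  have := mkr (m := m) AmRel.sum_one
  simp only [map_sum, map_one] at this
  simp only [eA]
  exact this.symm

lemma e_mul_e (i j : ℕ) : eA m i * eA m j = if i = j then eA m i else 0 := by
  split_ifs with h
  · subst h; simpa only [eA, map_mul] using mkr (m := m) (AmRel.idem i)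
  · simpa only [eA, map_mul, map_zero] using mkr (m := m) (AmRel.orth i j h)

lemma e_mul_u_self (i : ℕ) : eA m i * uA m i = uA m i := by
  simpa only [eA, uA, map_mul] using mkr (m := m) (AmRel.u_src i)

lemma u_mul_e_self (i : ℕ) : uA m i * eA m (i + 1) = uA m i := by
  simpa only [eA, uA, map_mul] using mkr (m := m) (AmRel.u_tgt i)

lemma e_mul_d_self (i : ℕ) : eA m (i + 1) * dA m i = dA m i := by
  simpa only [eA, dA, map_mul] using mkr (m := m) (AmRel.d_src i)

lemma d_mul_e_self (i : ℕ) : dA m i * eA m i = dA m i := by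
  simpa only [eA, dA, map_mul] using mkr (m := m) (AmRel.d_tgt i)

lemma e_mul_u (i j : ℕ) : eA m i * uA m j = if i = j then uA m j else 0 := by
  split_ifs with h
  · subst h; exact e_mul_u_self i
  · rw [← e_mul_u_self j, ← mul_assoc, e_mul_e, if_neg h, zero_mul]

lemma u_mul_e (i j : ℕ) : uA m i * eA m j = if j = i + 1 then uA m i else 0 := by
  split_ifs with h
  · subst h; exact u_mul_e_self i
  · rw [← u_mul_e_self i, mul_assoc, e_mul_e, if_neg (fun hh => h hh.symm), mul_zero]

lemma e_mul_d (i j : ℕ) : eA m i * dA m j = if i = j + 1 then dA m j else 0 := by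
  split_ifs with h
  · subst h; exact e_mul_d_self j
  · rw [← e_mul_d_self j, ← mul_assoc, e_mul_e, if_neg h, zero_mul]

lemma d_mul_e (i j : ℕ) : dA m i * eA m j = if j = i then dA m i else 0 := by
  split_ifs with h
  · rw [h]; exact d_mul_e_self i
  · rw [← d_mul_e_self i, mul_assoc, e_mul_e, if_neg (fun hh => h hh.symm), mul_zero]

lemma u_mul_u (i j : ℕ) : uA m i * uA m j = 0 := by
  by_cases h : j = i + 1
  · subst h; simpa only [uA, map_mul, map_zero] using mkr (m := m) (AmRel.uu i)
  · rw [← u_mul_e_self i, ← e_mul_u_self j, mul_assoc, ← mul_assoc (eA m (i + 1)), e_mul_e,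
      if_neg (fun hh => h hh.symm), zero_mul, mul_zero]

lemma d_mul_d (i j : ℕ) : dA m i * dA m j = 0 := by
  by_cases h : i = j + 1
  · subst h; simpa only [dA, map_mul, map_zero] using mkr (m := m) (AmRel.dd j)
  · rw [← d_mul_e_self i, ← e_mul_d_self j, mul_assoc, ← mul_assoc (eA m i), e_mul_e,
      if_neg h, zero_mul, mul_zero]

lemma u_mul_d_ne {i j : ℕ} (h : i ≠ j) : uA m i * dA m j = 0 := by
  rw [← u_mul_e_self i, ← e_mul_d_self j, mul_assoc, ← mul_assoc (eA m (i + 1)), e_mul_e,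
    if_neg (by omega), zero_mul, mul_zero]

lemma u_mul_d_self (i : ℕ) :
    uA m i * dA m i = if 1 ≤ i ∧ i < m then dA m (i - 1) * uA m (i - 1) else 0 := by
  split_ifs with h
  · obtain ⟨i', rfl⟩ : ∃ i', i = i' + 1 := ⟨i - 1, by omega⟩
    have := mkr (m := m) (AmRel.loops i' (by omega))
    simp only [map_mul] at this
    simpa only [uA, dA, Nat.add_sub_cancel] using this
  · rcases Nat.lt_or_ge i 1 with hi | hi
    · interval_cases i
      simpa only [uA, dA, map_mul, map_zero] using mkr (m := m) AmRel.loop0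
    · have hm : m ≤ i := by omega
      rw [uA_oob hm, zero_mul]

lemma d_mul_u_ne {i j : ℕ} (h : i ≠ j) : dA m i * uA m j = 0 := by
  rw [← d_mul_e_self i, ← e_mul_u_self j, mul_assoc, ← mul_assoc (eA m i), e_mul_e,
    if_neg h, zero_mul, mul_zero]

lemma e_mul_l (j i : ℕ) :
    eA m j * (dA m i * uA m i) = if j = i + 1 then dA m i * uA m i else 0 := by
  rw [← mul_assoc, e_mul_d]
  split_ifs with h
  · rfl
  · rw [zero_mul]

lemma l_mul_e (i j : ℕ) :
    (dA m i * uA m i) * eA m j = if j = i + 1 then dA m i * uA m i else 0 := by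
  rw [mul_assoc, u_mul_e]
  split_ifs with h
  · rfl
  · rw [mul_zero]

lemma u_mul_l (j i : ℕ) : uA m j * (dA m i * uA m i) = 0 := by
  rw [← mul_assoc]
  by_cases h : j = i
  · subst h
    rw [u_mul_d_self]
    split_ifs with h1
    · rw [mul_assoc, u_mul_u, mul_zero]
    · rw [zero_mul]
  · rw [u_mul_d_ne h, zero_mul]

lemma l_mul_u (i j : ℕ) : (dA m i * uA m i) * uA m j = 0 := by
  rw [mul_assoc, u_mul_u, mul_zero]

lemma d_mul_l (j i : ℕ) : dA m j * (dA m i * uA m i) = 0 := by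
  rw [← mul_assoc, d_mul_d, zero_mul]

lemma l_mul_d (i j : ℕ) : (dA m i * uA m i) * dA m j = 0 := by
  rw [mul_assoc]
  by_cases h : i = j
  · subst h
    rw [u_mul_d_self]
    split_ifs with h1
    · rw [← mul_assoc, d_mul_d, zero_mul]
    · rw [mul_zero]
  · rw [u_mul_d_ne h, mul_zero]

lemma l_mul_l (i j : ℕ) : (dA m i * uA m i) * (dA m j * uA m j) = 0 := by
  rw [← mul_assoc, l_mul_d, zero_mul]

/- ### Span facts -/

lemma span_mul_mem {A B : Set (Am m)} {C : Submodule ℤ (Am m)}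
    (h : ∀ a ∈ A, ∀ b ∈ B, a * b ∈ C) :
    ∀ x ∈ Submodule.span ℤ A, ∀ y ∈ Submodule.span ℤ B, x * y ∈ C := by
  intro x hx
  induction hx using Submodule.span_induction with
  | mem a ha =>
      intro y hy
      induction hy using Submodule.span_induction with
      | mem b hb => exact h a ha b hb
      | zero => rw [mul_zero]; exact C.zero_mem
      | add y z _ _ hy hz => rw [mul_add]; exact C.add_mem hy hz
      | smul r y _ hy => rw [mul_smul_comm]; exact C.smul_mem r hy
  | zero => intro y hy; rw [zero_mul]; exact C.zero_mem
  | add x z _ _ hx hz => intro y hy; rw [add_mul]; exact C.add_mem (hx y hy) (hz y hy)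
  | smul r x _ hx => intro y hy; rw [smul_mul_assoc]; exact C.smul_mem r (hx y hy)

/-- The grading of `A_m`. -/
def Gr (m : ℕ) : ℕ → Submodule ℤ (Am m) := fun k =>
  if k = 0 then Submodule.span ℤ (Set.range (amDeg0Fam m))
  else if k = 1 then Submodule.span ℤ (Set.range (amDeg1Fam m))
  else ⊥

lemma Gr_zero : Gr m 0 = Submodule.span ℤ (Set.range (amDeg0Fam m)) := rfl
lemma Gr_one : Gr m 1 = Submodule.span ℤ (Set.range (amDeg1Fam m)) := rfl
lemma Gr_ge_two {k : ℕ} (h : 2 ≤ k) : Gr m k = ⊥ := by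
  rw [Gr]; rw [if_neg (by omega), if_neg (by omega)]

lemma eA_memG0 (i : ℕ) : eA m i ∈ Gr m 0 := by
  rcases Nat.lt_or_ge m i with h | h
  · rw [eA_oob h]; exact (Gr m 0).zero_mem
  · exact Submodule.subset_span ⟨Sum.inl ⟨i, by omega⟩, rfl⟩

lemma uA_memG0 (i : ℕ) : uA m i ∈ Gr m 0 := by
  rcases Nat.lt_or_ge i m with h | h
  · exact Submodule.subset_span ⟨Sum.inr ⟨i, h⟩, rfl⟩
  · rw [uA_oob h]; exact (Gr m 0).zero_mem

lemma dA_memG1 (i : ℕ) : dA m i ∈ Gr m 1 := by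
  rcases Nat.lt_or_ge i m with h | h
  · exact Submodule.subset_span ⟨Sum.inl ⟨i, h⟩, rfl⟩
  · rw [dA_oob h]; exact (Gr m 1).zero_mem

lemma lA_memG1 (i : ℕ) : dA m i * uA m i ∈ Gr m 1 := by
  rcases Nat.lt_or_ge i m with h | h
  · exact Submodule.subset_span ⟨Sum.inr ⟨i, h⟩, rfl⟩
  · rw [dA_oob h, zero_mul]; exact (Gr m 1).zero_mem

lemma P00 : ∀ x ∈ Set.range (amDeg0Fam m), ∀ y ∈ Set.range (amDeg0Fam m), x * y ∈ Gr m 0 := by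
  rintro x ⟨b, rfl⟩ y ⟨c, rfl⟩
  rcases b with b | b <;> rcases c with c | c <;>
    simp only [amDeg0Fam, Sum.elim_inl, Sum.elim_inr]
  · rw [e_mul_e]
    split_ifs
    · exact eA_memG0 _
    · exact (Gr m 0).zero_mem
  · rw [e_mul_u]
    split_ifs
    · exact uA_memG0 _
    · exact (Gr m 0).zero_mem
  · rw [u_mul_e]
    split_ifs
    · exact uA_memG0 _
    · exact (Gr m 0).zero_mem
  · rw [u_mul_u]; exact (Gr m 0).zero_mem

lemma P01 : ∀ x ∈ Set.range (amDeg0Fam m), ∀ y ∈ Set.range (amDeg1Fam m), x * y ∈ Gr m 1 := by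
  rintro x ⟨b, rfl⟩ y ⟨c, rfl⟩
  rcases b with b | b <;> rcases c with c | c <;>
    simp only [amDeg0Fam, amDeg1Fam, Sum.elim_inl, Sum.elim_inr]
  · rw [e_mul_d]
    split_ifs
    · exact dA_memG1 _
    · exact (Gr m 1).zero_mem
  · rw [e_mul_l]
    split_ifs
    · exact lA_memG1 _
    · exact (Gr m 1).zero_mem
  · by_cases h : (b : ℕ) = c
    · rw [h, u_mul_d_self]
      split_ifs with h1
      · exact lA_memG1 _
      · exact (Gr m 1).zero_mem
    · rw [u_mul_d_ne h]; exact (Gr m 1).zero_mem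
  · rw [u_mul_l]; exact (Gr m 1).zero_mem

lemma P10 : ∀ x ∈ Set.range (amDeg1Fam m), ∀ y ∈ Set.range (amDeg0Fam m), x * y ∈ Gr m 1 := by
  rintro x ⟨b, rfl⟩ y ⟨c, rfl⟩
  rcases b with b | b <;> rcases c with c | c <;>
    simp only [amDeg0Fam, amDeg1Fam, Sum.elim_inl, Sum.elim_inr]
  · rw [d_mul_e]
    split_ifs
    · exact dA_memG1 _
    · exact (Gr m 1).zero_mem
  · by_cases h : (b : ℕ) = c
    · rw [h]; exact lA_memG1 _
    · rw [d_mul_u_ne h]; exact (Gr m 1).zero_mem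
  · rw [l_mul_e]
    split_ifs
    · exact lA_memG1 _
    · exact (Gr m 1).zero_mem
  · rw [l_mul_u]; exact (Gr m 1).zero_mem

lemma P11 : ∀ x ∈ Set.range (amDeg1Fam m), ∀ y ∈ Set.range (amDeg1Fam m),
    x * y ∈ (⊥ : Submodule ℤ (Am m)) := by
  rintro x ⟨b, rfl⟩ y ⟨c, rfl⟩
  rcases b with b | b <;> rcases c with c | c <;>
    simp only [amDeg1Fam, Sum.elim_inl, Sum.elim_inr, Submodule.mem_bot]
  · exact d_mul_d _ _
  · exact d_mul_l _ _
  · exact l_mul_d _ _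
  · exact l_mul_l _ _

lemma range_split : Set.range (amBasisFam m) =
    Set.range (amDeg0Fam m) ∪ Set.range (amDeg1Fam m) := by
  simp only [amBasisFam, amDeg0Fam, amDeg1Fam, Set.Sum.elim_range, Set.union_assoc]

lemma G0_le_span : Gr m 0 ≤ Submodule.span ℤ (Set.range (amBasisFam m)) := by
  rw [Gr_zero, range_split]
  exact Submodule.span_mono Set.subset_union_left

lemma G1_le_span : Gr m 1 ≤ Submodule.span ℤ (Set.range (amBasisFam m)) := by
  rw [Gr_one, range_split]
  exact Submodule.span_mono Set.subset_union_right

lemma PAll : ∀ x ∈ Set.range (amBasisFam m), ∀ y ∈ Set.range (amBasisFam m),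
    x * y ∈ Submodule.span ℤ (Set.range (amBasisFam m)) := by
  intro x hx y hy
  rw [range_split] at hx hy
  rcases hx with hx | hx <;> rcases hy with hy | hy
  · exact G0_le_span (P00 x hx y hy)
  · exact G1_le_span (P01 x hx y hy)
  · exact G1_le_span (P10 x hx y hy)
  · have := P11 x hx y hy
    rw [Submodule.mem_bot] at this
    rw [this]
    exact Submodule.zero_mem _

lemma one_mem_G0 : (1 : Am m) ∈ Gr m 0 := by
  rw [one_eq_sum]
  exact Submodule.sum_mem _ fun i _ => eA_memG0 i

lemma span_basis_top : Submodule.span ℤ (Set.range (amBasisFam m)) = ⊤ := by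
  rw [eq_top_iff]
  rintro a -
  obtain ⟨x, rfl⟩ := RingQuot.mkRingHom_surjective (AmRel m) a
  induction x using FreeAlgebra.induction with
  | grade0 r =>
      have h1 : (RingQuot.mkRingHom (AmRel m)) ((algebraMap ℤ FA) r) = r • (1 : Am m) := by
        rw [eq_intCast (algebraMap ℤ FA), map_intCast, zsmul_eq_mul, mul_one]
      rw [h1]
      exact Submodule.smul_mem _ r (G0_le_span one_mem_G0)
  | grade1 g =>
      rcases g with i | i | i
      · exact G0_le_span (eA_memG0 i)
      · exact G0_le_span (uA_memG0 i)
      · exact G1_le_span (dA_memG1 i)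
  | mul a b ha hb =>
      rw [map_mul]
      exact span_mul_mem PAll _ ha _ hb
  | add a b ha hb =>
      rw [map_add]
      exact Submodule.add_mem _ ha hb

lemma Gr_mul {a b : ℕ} : ∀ x ∈ Gr m a, ∀ y ∈ Gr m b, x * y ∈ Gr m (a + b) := by
  intro x hx y hy
  match a, b with
  | 0, 0 => exact span_mul_mem P00 x hx y hy
  | 0, 1 => exact span_mul_mem P01 x hx y hy
  | 1, 0 => exact span_mul_mem P10 x hx y hy
  | 1, 1 =>
      have h2 : Gr m 2 = ⊥ := Gr_ge_two (by omega)
      rw [h2]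
      exact span_mul_mem P11 x hx y hy
  | a' + 2, b =>
      rw [Gr_ge_two (by omega), Submodule.mem_bot] at hx
      rw [hx, zero_mul]
      exact Submodule.zero_mem _
  | 0, b' + 2 =>
      rw [Gr_ge_two (by omega), Submodule.mem_bot] at hy
      rw [hy, mul_zero]
      exact Submodule.zero_mem _
  | 1, b' + 2 =>
      rw [Gr_ge_two (by omega), Submodule.mem_bot] at hy
      rw [hy, mul_zero]
      exact Submodule.zero_mem _

end Aux

/-!
STATEMENT 9.  As an abelian group, `A_m` is free of rank `4m+1` with basis the images of
the `4m+1` paths `(0),…,(m), (0|1),…,(m-1|m), (1|0),…,(m|m-1), (1|0|1),…,(m|m-1|m)`.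
Moreover, with respect to the grading of `A_m` determined by `deg (i) = deg (i|i+1) = 0`
and `deg (i+1|i) = 1`, the degree-0 component is free abelian of rank `2m+1` with basis
`(0),…,(m),(0|1),…,(m-1|m)`, the degree-1 component is free abelian of rank `2m` with
basis `(1|0),…,(m|m-1),(1|0|1),…,(m|m-1|m)`, and all components of degree `≥ 2` vanish.
The grading is encoded as a family `G : ℕ → Submodule ℤ (Am m)` forming an internal
direct sum decomposition, multiplicative (`G a * G b ⊆ G (a+b)`, `1 ∈ G 0`) and
containing the generators in the prescribed degrees.
-/

theorem stmt9 (m : ℕ) (hm : 1 ≤ m) :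
    LinearIndependent ℤ (amBasisFam m) ∧
    Submodule.span ℤ (Set.range (amBasisFam m)) = ⊤ ∧
    ∃ G : ℕ → Submodule ℤ (Am m),
      DirectSum.IsInternal G ∧
      (1 : Am m) ∈ G 0 ∧
      (∀ a b : ℕ, ∀ x ∈ G a, ∀ y ∈ G b, x * y ∈ G (a + b)) ∧
      (∀ i : ℕ, i ≤ m → eA m i ∈ G 0) ∧
      (∀ i : ℕ, i < m → uA m i ∈ G 0) ∧
      (∀ i : ℕ, i < m → dA m i ∈ G 1) ∧
      G 0 = Submodule.span ℤ (Set.range (amDeg0Fam m)) ∧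
      LinearIndependent ℤ (amDeg0Fam m) ∧
      G 1 = Submodule.span ℤ (Set.range (amDeg1Fam m)) ∧
      LinearIndependent ℤ (amDeg1Fam m) ∧
      (∀ k : ℕ, 2 ≤ k → G k = ⊥) := by
  classical
  have hdisj : Disjoint (Submodule.span ℤ (Set.range (amDeg0Fam m)))
      (Submodule.span ℤ (Set.range (amDeg1Fam m))) := by
    have h := linearIndependent_sum.mp (indep_sum (m := m))
    simpa only [Sum.elim_comp_inl, Sum.elim_comp_inr] using h.2.2
  have hind := linearIndependent_sum.mp (indep_sum (m := m))
  refine ⟨indep_basisFam, span_basis_top, Gr m, ?_, one_mem_G0, fun a b x hx y hy => Gr_mul x hx y hy,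
    fun i _ => eA_memG0 i, fun i _ => uA_memG0 i, fun i _ => dA_memG1 i,
    Gr_zero, ?_, Gr_one, ?_, fun k hk => Gr_ge_two hk⟩
  · -- DirectSum.IsInternal
    rw [DirectSum.isInternal_submodule_iff_iSupIndep_and_iSup_eq_top]
    constructor
    · rw [iSupIndep_def]
      intro i
      match i with
      | 0 =>
          refine Disjoint.mono_right ?_ hdisj
          refine iSup_le fun j => iSup_le fun hj => ?_
          match j with
          | 0 => exact absurd rfl hj
          | 1 => exact le_of_eq Gr_one
          | (k + 2) => rw [Gr_ge_two (by omega)]; exact bot_le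
      | 1 =>
          refine Disjoint.mono_right ?_ hdisj.symm
          refine iSup_le fun j => iSup_le fun hj => ?_
          match j with
          | 0 => exact le_of_eq Gr_zero
          | 1 => exact absurd rfl hj
          | (k + 2) => rw [Gr_ge_two (by omega)]; exact bot_le
      | (k + 2) =>
          rw [Gr_ge_two (m := m) (by omega : 2 ≤ k + 2)]
          exact disjoint_bot_left
    · rw [eq_top_iff, ← span_basis_top (m := m), range_split, Submodule.span_union]
      refine sup_le ?_ ?_
      · rw [← Gr_zero]; exact le_iSup (Gr m) 0
      · rw [← Gr_one]; exact le_iSup (Gr m) 1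
  · simpa only [Sum.elim_comp_inl] using hind.1
  · simpa only [Sum.elim_comp_inr] using hind.2.1
end
end

section
/- For each 0 ≤ i ≤ m, the left A_m-module P_i is projective (it is a direct summand of A_m, since A_m = ⊕_{j=0}^m P_j as left modules) and indecomposable: P_i is nonzero, and whenever P_i ≅ M ⊕ N as left A_m-modules, one of M, N is zero. -/
/-!
STATEMENT 11.  For each `0 ≤ i ≤ m`, the left `A_m`-module `P_i = A_m (i)` is projective
and indecomposable: `P_i` is nonzero, and whenever `P_i ≅ M ⊕ N` as left `A_m`-modules,
one of `M`, `N` is zero.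
-/

noncomputable section
namespace Zig
variable {m : ℕ}

/-- loop based at vertex j+1 -/
def lA (m j : ℕ) : Am m := dA m j * uA m j

lemma rel {x y : FA} (h : AmRel m x y) : toAm m x = toAm m y := RingQuot.mkRingHom_rel h

lemma ee (i j : ℕ) : eA m i * eA m j = if i = j then eA m i else 0 := by
  split
  · next h => subst h; rw [eA, ← map_mul]; exact rel (AmRel.idem i)
  · next h => rw [eA, eA, ← map_mul, rel (AmRel.orth i j h), map_zero]

lemma eu_self (k : ℕ) : eA m k * uA m k = uA m k := by
  rw [eA, uA, ← map_mul]; exact rel (AmRel.u_src k)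

lemma ue_self (k : ℕ) : uA m k * eA m (k+1) = uA m k := by
  rw [eA, uA, ← map_mul]; exact rel (AmRel.u_tgt k)

lemma ed_self (k : ℕ) : eA m (k+1) * dA m k = dA m k := by
  rw [eA, dA, ← map_mul]; exact rel (AmRel.d_src k)

lemma de_self (k : ℕ) : dA m k * eA m k = dA m k := by
  rw [eA, dA, ← map_mul]; exact rel (AmRel.d_tgt k)

lemma eu (j k : ℕ) : eA m j * uA m k = if j = k then uA m k else 0 := by
  split
  · next h => subst h; exact eu_self j
  · next h => rw [← eu_self k, ← mul_assoc, ee, if_neg h, zero_mul]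

lemma ue (k j : ℕ) : uA m k * eA m j = if j = k + 1 then uA m k else 0 := by
  split
  · next h => subst h; exact ue_self k
  · next h => rw [← ue_self k, mul_assoc, ee, if_neg (fun hh => h hh.symm), mul_zero]

lemma ed (j k : ℕ) : eA m j * dA m k = if j = k + 1 then dA m k else 0 := by
  split
  · next h => subst h; exact ed_self k
  · next h => rw [← ed_self k, ← mul_assoc, ee, if_neg h, zero_mul]

lemma de (k j : ℕ) : dA m k * eA m j = if j = k then dA m k else 0 := by
  split
  · next h => subst h; exact de_self _
  · next h => rw [← de_self k, mul_assoc, ee, if_neg (fun hh => h hh.symm), mul_zero]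

lemma uu (j k : ℕ) : uA m j * uA m k = 0 := by
  by_cases h : k = j + 1
  · subst h; rw [uA, uA, ← map_mul, rel (AmRel.uu j), map_zero]
  · rw [← eu_self k, ← ue_self j, mul_assoc, ← mul_assoc (eA m (j+1)), ee,
      if_neg (fun hh => h hh.symm), zero_mul, mul_zero]

lemma dd (j k : ℕ) : dA m j * dA m k = 0 := by
  by_cases h : j = k + 1
  · subst h; rw [dA, dA, ← map_mul, rel (AmRel.dd k), map_zero]
  · rw [← de_self j, ← ed_self k, mul_assoc, ← mul_assoc (eA m j), ee,
       if_neg h, zero_mul, mul_zero]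

lemma ud (j k : ℕ) : uA m j * dA m k =
    if j = k ∧ 1 ≤ j ∧ j < m then lA m (j - 1) else 0 := by
  by_cases hjk : j = k
  · subst hjk
    by_cases hj : 1 ≤ j ∧ j < m
    · rw [if_pos ⟨rfl, hj⟩]
      obtain ⟨h1, h2⟩ := hj
      obtain ⟨i, rfl⟩ : ∃ i, j = i + 1 := ⟨j - 1, by omega⟩
      have := rel (AmRel.loops (m := m) i (by omega))
      rw [uA, dA, ← map_mul, this, map_mul]
      simp [lA, dA, uA]
    · rw [if_neg (by tauto)]
      rcases Nat.lt_or_ge j 1 with h | h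
      · interval_cases j
        rw [uA, dA, ← map_mul, rel (AmRel.loop0 (m := m)), map_zero]
      · have hm : m ≤ j := by omega
        rw [uA, rel (AmRel.u_zero j hm), map_zero, zero_mul]
  · rw [if_neg (by tauto), ← ue_self j, ← ed_self k, mul_assoc,
      ← mul_assoc (eA m (j+1)), ee, if_neg (by omega), zero_mul, mul_zero]

lemma du (j k : ℕ) : dA m j * uA m k = if j = k ∧ j < m then lA m j else 0 := by
  by_cases hjk : j = k
  · subst hjk
    by_cases hj : j < m
    · rw [if_pos ⟨rfl, hj⟩]; rfl
    · rw [if_neg (by tauto), uA, rel (AmRel.u_zero j (by omega)), map_zero, mul_zero]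
  · rw [if_neg (by tauto), ← de_self j, ← eu_self k, mul_assoc,
      ← mul_assoc (eA m j), ee, if_neg hjk, zero_mul, mul_zero]

-- loop products
lemma el (j k : ℕ) : eA m j * lA m k = if j = k + 1 then lA m k else 0 := by
  rw [lA, ← mul_assoc, ed]; split <;> simp [lA]

lemma le (k j : ℕ) : lA m k * eA m j = if j = k + 1 then lA m k else 0 := by
  rw [lA, mul_assoc, ue]; split <;> simp [lA]

lemma lu (k j : ℕ) : lA m k * uA m j = 0 := by
  rw [lA, mul_assoc, uu, mul_zero]

lemma dl (j k : ℕ) : dA m j * lA m k = 0 := by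
  rw [lA, ← mul_assoc, dd, zero_mul]

lemma ul (j k : ℕ) : uA m j * lA m k = 0 := by
  rw [lA, ← mul_assoc, ud]
  split
  · rw [lA, mul_assoc, uu, mul_zero]
  · rw [zero_mul]

lemma ld (k j : ℕ) : lA m k * dA m j = 0 := by
  rw [lA, mul_assoc, ud]
  split
  · exact dl _ _
  · rw [mul_zero]

lemma ll (j k : ℕ) : lA m j * lA m k = 0 := by
  rw [lA, mul_assoc, ul, mul_zero]

end Zig
end

noncomputable section
namespace Zig
variable {m : ℕ}

def Bset (m : ℕ) : Set (Am m) :=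
  {x | ∃ j, x = eA m j ∨ x = uA m j ∨ x = dA m j ∨ x = lA m j}

def Sspan (m : ℕ) : Submodule ℤ (Am m) := Submodule.span ℤ (Bset m)

lemma mem_e (j : ℕ) : eA m j ∈ Sspan m := Submodule.subset_span ⟨j, Or.inl rfl⟩
lemma mem_u (j : ℕ) : uA m j ∈ Sspan m := Submodule.subset_span ⟨j, Or.inr (Or.inl rfl)⟩
lemma mem_d (j : ℕ) : dA m j ∈ Sspan m := Submodule.subset_span ⟨j, Or.inr (Or.inr (Or.inl rfl))⟩
lemma mem_l (j : ℕ) : lA m j ∈ Sspan m := Submodule.subset_span ⟨j, Or.inr (Or.inr (Or.inr rfl))⟩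

lemma one_eq_sum : (1 : Am m) = ∑ j ∈ Finset.range (m+1), eA m j := by
  have h := rel (AmRel.sum_one (m := m))
  rw [map_sum, map_one] at h
  exact h.symm

lemma one_mem : (1 : Am m) ∈ Sspan m := by
  rw [one_eq_sum]; exact Submodule.sum_mem _ (fun j _ => mem_e j)

lemma basis_mul {x y : Am m} (hx : x ∈ Bset m) (hy : y ∈ Bset m) :
    x * y ∈ Sspan m := by
  obtain ⟨j, hx⟩ := hx; obtain ⟨k, hy⟩ := hy
  rcases hx with rfl | rfl | rfl | rfl <;> rcases hy with rfl | rfl | rfl | rfl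
  · rw [ee]; split_ifs; exacts [mem_e _, (Sspan m).zero_mem]
  · rw [eu]; split_ifs; exacts [mem_u _, (Sspan m).zero_mem]
  · rw [ed]; split_ifs; exacts [mem_d _, (Sspan m).zero_mem]
  · rw [el]; split_ifs; exacts [mem_l _, (Sspan m).zero_mem]
  · rw [ue]; split_ifs; exacts [mem_u _, (Sspan m).zero_mem]
  · rw [uu]; exact (Sspan m).zero_mem
  · rw [ud]; split_ifs; exacts [mem_l _, (Sspan m).zero_mem]
  · rw [ul]; exact (Sspan m).zero_mem
  · rw [de]; split_ifs; exacts [mem_d _, (Sspan m).zero_mem]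
  · rw [du]; split_ifs; exacts [mem_l _, (Sspan m).zero_mem]
  · rw [dd]; exact (Sspan m).zero_mem
  · rw [dl]; exact (Sspan m).zero_mem
  · rw [le]; split_ifs; exacts [mem_l _, (Sspan m).zero_mem]
  · rw [lu]; exact (Sspan m).zero_mem
  · rw [ld]; exact (Sspan m).zero_mem
  · rw [ll]; exact (Sspan m).zero_mem

lemma mul_mem_S {x y : Am m} (hx : x ∈ Sspan m) (hy : y ∈ Sspan m) :
    x * y ∈ Sspan m := by
  induction hx using Submodule.span_induction with
  | mem a ha =>
    induction hy using Submodule.span_induction with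
    | mem b hb => exact basis_mul ha hb
    | zero => rw [mul_zero]; exact (Sspan m).zero_mem
    | add b c _ _ hb hc => rw [mul_add]; exact (Sspan m).add_mem hb hc
    | smul r b _ hb => rw [mul_smul_comm]; exact (Sspan m).smul_mem r hb
  | zero => rw [zero_mul]; exact (Sspan m).zero_mem
  | add a b _ _ ha hb => rw [add_mul]; exact (Sspan m).add_mem ha hb
  | smul r a _ ha => rw [smul_mul_assoc]; exact (Sspan m).smul_mem r ha

lemma mem_S (x : Am m) : x ∈ Sspan m := by
  obtain ⟨y, rfl⟩ := RingQuot.mkRingHom_surjective (AmRel m) x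
  induction y using FreeAlgebra.induction with
  | grade0 r =>
    have : (RingQuot.mkRingHom (AmRel m)) (algebraMap ℤ FA r) = r • (1 : Am m) := by
      rw [eq_intCast (algebraMap ℤ FA), map_intCast]; simp
    rw [this]; exact (Sspan m).smul_mem r one_mem
  | grade1 x =>
    cases x with
    | e j => exact mem_e j
    | u j => exact mem_u j
    | d j => exact mem_d j
  | mul a b ha hb => rw [map_mul]; exact mul_mem_S ha hb
  | add a b ha hb => rw [map_add]; exact (Sspan m).add_mem ha hb

/-- sandwiching by `eA m i` lands in the span of `eA m i` and the loop at `i`. -/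
lemma sandwich (i : ℕ) (x : Am m) :
    eA m i * x * eA m i ∈ Submodule.span ℤ {eA m i, lA m (i-1)} := by
  set T := Submodule.span ℤ ({eA m i, lA m (i-1)} : Set (Am m)) with hT
  have he : eA m i ∈ T := Submodule.subset_span (Or.inl rfl)
  have hl : lA m (i-1) ∈ T := Submodule.subset_span (Or.inr rfl)
  induction (mem_S x) using Submodule.span_induction with
  | mem b hb =>
    obtain ⟨j, hb⟩ := hb
    rcases hb with rfl | rfl | rfl | rfl
    · rw [ee]; split_ifs
      · rw [ee]; split_ifs; exacts [he, T.zero_mem]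
      · rw [zero_mul]; exact T.zero_mem
    · rw [eu]; split_ifs with h
      · rw [ue, if_neg (by omega)]; exact T.zero_mem
      · rw [zero_mul]; exact T.zero_mem
    · rw [ed]; split_ifs with h
      · rw [de, if_neg (by omega)]; exact T.zero_mem
      · rw [zero_mul]; exact T.zero_mem
    · rw [el]; split_ifs with h
      · rw [le, if_pos h]
        have : j = i - 1 := by omega
        subst this; exact hl
      · rw [zero_mul]; exact T.zero_mem
  | zero => rw [mul_zero, zero_mul]; exact T.zero_mem
  | add a b _ _ ha hb => rw [mul_add, add_mul]; exact T.add_mem ha hb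
  | smul r a _ ha => rw [mul_smul_comm, smul_mul_assoc]; exact T.smul_mem r ha

end Zig
end

noncomputable section
namespace Zig
open Matrix

abbrev M4 := Matrix (Fin 4) (Fin 4) ℤ

def P1 : M4 := Matrix.single 0 0 1
def P2 : M4 := Matrix.single 1 1 1 + Matrix.single 2 2 1
def P3 : M4 := Matrix.single 3 3 1
def Mu1 : M4 := Matrix.single 0 1 1
def Mu2 : M4 := Matrix.single 2 3 1
def Md1 : M4 := Matrix.single 2 0 1
def Md2 : M4 := Matrix.single 3 1 1

def Ege (t m j : ℕ) : M4 :=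
  (if j = t - 1 then P1 else 0) + (if j = t then (if t = m then P2 + P3 else P2) else 0)
    + (if j = t + 1 ∧ t < m then P3 else 0)
def Egu (t m j : ℕ) : M4 := if j = t - 1 then Mu1 else if j = t ∧ t < m then Mu2 else 0
def Egd (t m j : ℕ) : M4 := if j = t - 1 then Md1 else if j = t ∧ t < m then Md2 else 0

def Fgen (t m : ℕ) : AmGen → M4
  | .e j => Ege t m j
  | .u j => Egu t m j
  | .d j => Egd t m j

def rho0 (t m : ℕ) : FA →ₐ[ℤ] M4 := FreeAlgebra.lift ℤ (Fgen t m)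

lemma rho0_e (t m j : ℕ) : rho0 t m (ge j) = Ege t m j := by
  rw [ge, rho0, FreeAlgebra.lift_ι_apply]; rfl
lemma rho0_u (t m j : ℕ) : rho0 t m (gu j) = Egu t m j := by
  rw [gu, rho0, FreeAlgebra.lift_ι_apply]; rfl
lemma rho0_d (t m j : ℕ) : rho0 t m (gd j) = Egd t m j := by
  rw [gd, rho0, FreeAlgebra.lift_ι_apply]; rfl

lemma rho0_rel {t m : ℕ} (ht1 : 1 ≤ t) (htm : t ≤ m) :
    ∀ ⦃x y : FA⦄, AmRel m x y → rho0 t m x = rho0 t m y := by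
  intro x y h
  induction h with
  | idem i =>
    simp only [_root_.map_mul, _root_.map_zero, rho0_e, rho0_u, rho0_d]
    unfold Ege; split_ifs <;> first | omega | decide
  | orth i j hij =>
    simp only [_root_.map_mul, _root_.map_zero, rho0_e, rho0_u, rho0_d]
    unfold Ege; split_ifs <;> first | omega | decide
  | sum_one =>
    rw [_root_.map_sum, _root_.map_one]
    simp only [rho0_e]
    unfold Ege
    rw [Finset.sum_add_distrib, Finset.sum_add_distrib]
    rw [Finset.sum_ite_eq' (Finset.range (m+1)) (t-1) (fun _ => P1),
      Finset.sum_ite_eq' (Finset.range (m+1)) t (fun _ => if t = m then P2 + P3 else P2)]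
    rw [if_pos (Finset.mem_range.2 (by omega)), if_pos (Finset.mem_range.2 (by omega))]
    by_cases hlt : t < m
    · have : ∀ j ∈ Finset.range (m+1), (if j = t + 1 ∧ t < m then P3 else 0)
          = (if j = t + 1 then P3 else 0) := by intro j _; simp [hlt]
      rw [Finset.sum_congr rfl this,
        Finset.sum_ite_eq' (Finset.range (m+1)) (t+1) (fun _ => P3),
        if_pos (Finset.mem_range.2 (by omega)), if_neg (by omega)]
      decide
    · have ht : t = m := by omega
      have : ∀ j ∈ Finset.range (m+1), (if j = t + 1 ∧ t < m then P3 else 0) = 0 := by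
        intro j _; simp [hlt]
      rw [Finset.sum_congr rfl this, Finset.sum_const_zero, if_pos ht]
      decide
  | e_zero i hi =>
    simp only [rho0_e, _root_.map_zero]
    unfold Ege; split_ifs <;> first | omega | decide
  | u_zero i hi =>
    simp only [rho0_u, _root_.map_zero]
    unfold Egu; split_ifs <;> first | omega | decide
  | d_zero i hi =>
    simp only [rho0_d, _root_.map_zero]
    unfold Egd; split_ifs <;> first | omega | decide
  | u_src i =>
    simp only [_root_.map_mul, _root_.map_zero, rho0_e, rho0_u, rho0_d]
    unfold Ege Egu; split_ifs <;> first | omega | decide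
  | u_tgt i =>
    simp only [_root_.map_mul, _root_.map_zero, rho0_e, rho0_u, rho0_d]
    unfold Ege Egu; split_ifs <;> first | omega | decide
  | d_src i =>
    simp only [_root_.map_mul, _root_.map_zero, rho0_e, rho0_u, rho0_d]
    unfold Ege Egd; split_ifs <;> first | omega | decide
  | d_tgt i =>
    simp only [_root_.map_mul, _root_.map_zero, rho0_e, rho0_u, rho0_d]
    unfold Ege Egd; split_ifs <;> first | omega | decide
  | uu i =>
    simp only [_root_.map_mul, _root_.map_zero, rho0_e, rho0_u, rho0_d]
    unfold Egu; split_ifs <;> first | omega | decide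
  | dd i =>
    simp only [_root_.map_mul, _root_.map_zero, rho0_e, rho0_u, rho0_d]
    unfold Egd; split_ifs <;> first | omega | decide
  | loops i hi =>
    simp only [_root_.map_mul, _root_.map_zero, rho0_e, rho0_u, rho0_d]
    unfold Egu Egd; split_ifs <;> first | omega | decide
  | loop0 =>
    simp only [_root_.map_mul, _root_.map_zero, rho0_e, rho0_u, rho0_d]
    unfold Egu Egd; split_ifs <;> first | omega | decide

end Zig
end

noncomputable section
namespace Zig
open Matrix

def rho {t m : ℕ} (ht1 : 1 ≤ t) (htm : t ≤ m) : Am m →+* M4 :=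
  RingQuot.lift ⟨(rho0 t m).toRingHom, fun _ _ h => rho0_rel ht1 htm h⟩

lemma rho_apply {t m : ℕ} (ht1 : 1 ≤ t) (htm : t ≤ m) (x : FA) :
    rho ht1 htm (toAm m x) = rho0 t m x :=
  RingQuot.lift_mkRingHom_apply _ _ x

lemma entry_extract {z w : ℤ} {A B : M4} (h : z • A + w • B = 0) (r c : Fin 4) :
    z * A r c + w * B r c = 0 := by
  have := congrFun (congrFun h r) c
  rw [Matrix.add_apply, Matrix.smul_apply, Matrix.smul_apply, Matrix.zero_apply] at this
  simpa [smul_eq_mul] using this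

lemma indep {m i : ℕ} (hm : 1 ≤ m) (hi : i ≤ m) {z w : ℤ}
    (h : z • eA m i + w • lA m (i - 1) = 0) : z = 0 ∧ w = 0 := by
  set t := max i 1 with htdef
  have ht1 : 1 ≤ t := le_max_right _ _
  have htm : t ≤ m := max_le hi hm
  have happ := congrArg (rho ht1 htm) h
  rw [map_add, map_zsmul, map_zsmul, map_zero] at happ
  rw [eA, lA, dA, uA, rho_apply, _root_.map_mul, rho_apply, rho_apply] at happ
  rw [rho0_e, rho0_u, rho0_d] at happ
  have hi1 : i - 1 = t - 1 := by omega
  rw [hi1] at happ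
  rw [Egd, Egu, if_pos rfl, if_pos rfl] at happ
  have hMdu : (Md1 * Mu1 : M4) = Matrix.single 2 1 1 := by decide
  rw [hMdu] at happ
  rcases Nat.eq_zero_or_pos i with h0 | h0
  · have ht : t = 1 := by omega
    have hE : Ege t m i = P1 := by
      unfold Ege; split_ifs <;> first | omega | abel
    rw [hE] at happ
    refine ⟨?_, ?_⟩
    · have h' := entry_extract happ 0 0
      have e1 : (P1 : M4) 0 0 = 1 := by decide
      have e2 : (Matrix.single 2 1 1 : M4) 0 0 = 0 := by decide
      rw [e1, e2] at h'; omega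
    · have h' := entry_extract happ 2 1
      have e1 : (P1 : M4) 2 1 = 0 := by decide
      have e2 : (Matrix.single 2 1 1 : M4) 2 1 = 1 := by decide
      rw [e1, e2] at h'; omega
  · have ht : t = i := by omega
    rcases eq_or_ne i m with him | him
    · have hE : Ege t m i = P2 + P3 := by
        unfold Ege; split_ifs <;> first | omega | abel
      rw [hE] at happ
      refine ⟨?_, ?_⟩
      · have h' := entry_extract happ 1 1
        have e1 : (P2 + P3 : M4) 1 1 = 1 := by decide
        have e2 : (Matrix.single 2 1 1 : M4) 1 1 = 0 := by decide
        rw [e1, e2] at h'; omega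
      · have h' := entry_extract happ 2 1
        have e1 : (P2 + P3 : M4) 2 1 = 0 := by decide
        have e2 : (Matrix.single 2 1 1 : M4) 2 1 = 1 := by decide
        rw [e1, e2] at h'; omega
    · have hE : Ege t m i = P2 := by
        unfold Ege; split_ifs <;> first | omega | abel
      rw [hE] at happ
      refine ⟨?_, ?_⟩
      · have h' := entry_extract happ 1 1
        have e1 : (P2 : M4) 1 1 = 1 := by decide
        have e2 : (Matrix.single 2 1 1 : M4) 1 1 = 0 := by decide
        rw [e1, e2] at h'; omega
      · have h' := entry_extract happ 2 1
        have e1 : (P2 : M4) 2 1 = 0 := by decide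
        have e2 : (Matrix.single 2 1 1 : M4) 2 1 = 1 := by decide
        rw [e1, e2] at h'; omega

lemma e_ne_zero {m i : ℕ} (hm : 1 ≤ m) (hi : i ≤ m) : eA m i ≠ 0 := by
  intro h
  have : (1 : ℤ) • eA m i + (0 : ℤ) • lA m (i - 1) = 0 := by rw [h]; simp
  exact one_ne_zero (indep hm hi this).1

lemma idem_eAe {m i : ℕ} (hm : 1 ≤ m) (hi : i ≤ m) {v : Am m}
    (hv : eA m i * v * eA m i = v) (hvv : v * v = v) : v = 0 ∨ v = eA m i := by
  have hmem := sandwich i v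
  rw [hv] at hmem
  obtain ⟨z, w, hzw⟩ := Submodule.mem_span_pair.1 hmem
  have hee' : eA m i * eA m i = eA m i := by rw [ee, if_pos rfl]
  have hll' : lA m (i-1) * lA m (i-1) = 0 := ll _ _
  rcases Nat.eq_zero_or_pos i with h0 | h0
  · -- i = 0 : cross terms vanish
    subst h0
    have hel' : eA m 0 * lA m 0 = 0 := by rw [el, if_neg (by omega)]
    have hle' : lA m 0 * eA m 0 = 0 := by rw [le, if_neg (by omega)]
    have hexp : v * v = (z * z) • eA m 0 := by
      rw [← hzw]
      simp only [add_mul, mul_add, smul_mul_assoc, mul_smul_comm, hee', hel', hle', hll',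
        smul_smul, smul_add, smul_zero, add_zero, zero_add]
      try module
    have h0' : (z * z - z) • eA m 0 + (0 - w) • lA m 0 = 0 := by
      have hs : v * v - v = 0 := by rw [hvv, sub_self]
      rw [hexp] at hs
      rw [← hzw] at hs
      rw [← hs]
      module
    obtain ⟨hz, hw⟩ := indep hm hi h0'
    have hw0 : w = 0 := by omega
    have hz01 : z = 0 ∨ z = 1 := by
      have : z * (z - 1) = 0 := by linear_combination hz
      rcases mul_eq_zero.1 this with h | h
      · left; exact h
      · right; omega
    subst hw0
    rcases hz01 with rfl | rfl
    · left; rw [← hzw]; simp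
    · right; rw [← hzw]; simp
  · have hii : i = (i - 1) + 1 := by omega
    have hel' : eA m i * lA m (i-1) = lA m (i-1) := by rw [el, if_pos hii]
    have hle' : lA m (i-1) * eA m i = lA m (i-1) := by rw [le, if_pos hii]
    have hexp : v * v = (z * z) • eA m i + (z * w + w * z) • lA m (i-1) := by
      rw [← hzw]
      simp only [add_mul, mul_add, smul_mul_assoc, mul_smul_comm, hee', hel', hle', hll',
        smul_smul, smul_add, smul_zero, add_zero]
      try module
    have h0' : (z * z - z) • eA m i + ((z * w + w * z) - w) • lA m (i-1) = 0 := by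
      have hs : v * v - v = 0 := by rw [hvv, sub_self]
      rw [hexp] at hs
      rw [← hzw] at hs
      rw [← hs]
      module
    obtain ⟨hz, hw⟩ := indep hm hi h0'
    have hz01 : z = 0 ∨ z = 1 := by
      have : z * (z - 1) = 0 := by linear_combination hz
      rcases mul_eq_zero.1 this with h | h
      · left; exact h
      · right; omega
    rcases hz01 with rfl | rfl
    · have hw0 : w = 0 := by omega
      subst hw0; left; rw [← hzw]; simp
    · have hw0 : w = 0 := by omega
      subst hw0; right; rw [← hzw]; simp

end Zig
end

noncomputable section
namespace Zig

variable {m i : ℕ}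

lemma mul_e_mem (x : Am m) : x * eA m i ∈ Pmod m i :=
  Submodule.mem_span_singleton.2 ⟨x, rfl⟩

/-- retraction `Am m → Pmod m i`, `x ↦ x * e`. -/
def retr (m i : ℕ) : Am m →ₗ[Am m] Pmod m i :=
  LinearMap.codRestrict (Pmod m i) (LinearMap.toSpanSingleton (Am m) (Am m) (eA m i))
    (fun x => mul_e_mem x)

lemma elt_eq (x : Pmod m i) : (x : Am m) * eA m i = (x : Am m) := by
  obtain ⟨a, ha⟩ := Submodule.mem_span_singleton.1 x.2
  have hee' : eA m i * eA m i = eA m i := by rw [ee, if_pos rfl]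
  rw [← ha, smul_eq_mul, mul_assoc, hee']

lemma proj_P : Module.Projective (Am m) (Pmod m i) := by
  apply Module.Projective.of_split (Pmod m i).subtype (retr m i)
  ext x
  show ((x : Am m) * eA m i : Am m) = (x : Am m)
  exact elt_eq x

lemma nontriv_P (hm : 1 ≤ m) (hi : i ≤ m) : Nontrivial (Pmod m i) := by
  refine ⟨⟨eA m i, Submodule.mem_span_singleton_self _⟩, 0, fun h => ?_⟩
  exact e_ne_zero hm hi (congrArg Subtype.val h)

lemma indec_P (hm : 1 ≤ m) (hi : i ≤ m) (M N : Type) [AddCommGroup M] [Module (Am m) M]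
    [AddCommGroup N] [Module (Am m) N] (φ : (Pmod m i) ≃ₗ[Am m] M × N) :
    Subsingleton M ∨ Subsingleton N := by
  classical
  set e := eA m i with he
  have heP : e ∈ Pmod m i := Submodule.mem_span_singleton_self _
  have hee' : e * e = e := by rw [he, ee, if_pos rfl]
  let q : M × N →ₗ[Am m] M × N := (LinearMap.inl (Am m) M N).comp (LinearMap.fst (Am m) M N)
  let p : Pmod m i →ₗ[Am m] Pmod m i :=
    (φ.symm.toLinearMap.comp q).comp φ.toLinearMap
  have hq : ∀ y : M × N, q y = (y.1, 0) := fun y => rfl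
  have hp : ∀ x, p x = φ.symm (((φ x).1, 0)) := fun x => rfl
  -- p applied twice equals p
  have hpp : ∀ x, p (p x) = p x := by
    intro x
    rw [hp, hp, LinearEquiv.apply_symm_apply]
  -- value of p at e
  set v : Am m := (p ⟨e, heP⟩ : Am m) with hv
  have hvP : v ∈ Pmod m i := (p ⟨e, heP⟩).2
  have hve : v * e = v := elt_eq (p ⟨e, heP⟩)
  have hev : e * v = v := by
    have h1 : (⟨e, heP⟩ : Pmod m i) = e • ⟨e, heP⟩ := Subtype.ext hee'.symm
    have h2 := congrArg (fun x => (p x : Am m)) h1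
    simp only [map_smul] at h2
    exact h2.symm
  have hvv : v * v = v := by
    have h1 : p ⟨e, heP⟩ = v • ⟨e, heP⟩ := Subtype.ext (by
      show v = v • e
      rw [smul_eq_mul, hve])
    have h2 := hpp ⟨e, heP⟩
    rw [h1, map_smul] at h2
    have h3 := congrArg Subtype.val h2
    simp only [SetLike.val_smul, smul_eq_mul] at h3
    have h4 : v * (p ⟨e, heP⟩ : Am m) = v * e := h3
    rw [hve] at h4
    exact h4
  have hsand : e * v * e = v := by rw [hev, hve]
  -- p is scalar: for any x, p x = v • x essentially
  have hpx : ∀ x : Pmod m i, (p x : Am m) = (x : Am m) * v := by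
    intro x
    obtain ⟨a, ha⟩ := Submodule.mem_span_singleton.1 x.2
    have hx : x = a • (⟨e, heP⟩ : Pmod m i) := Subtype.ext ha.symm
    rw [hx, map_smul]
    show a * v = ((a • (⟨e, heP⟩ : Pmod m i) : Pmod m i) : Am m) * v
    show a * v = (a • e) * v
    rw [smul_eq_mul, mul_assoc, hev]
  rcases idem_eAe hm hi hsand hvv with h0 | h1
  · -- v = 0 : p = 0, M is trivial
    left
    have hp0 : ∀ x : Pmod m i, p x = 0 := by
      intro x
      apply Subtype.ext
      rw [hpx, h0, mul_zero]; rfl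
    refine ⟨fun m1 m2 => ?_⟩
    have key : ∀ mm : M, mm = 0 := by
      intro mm
      have h2 := hp0 (φ.symm (mm, 0))
      rw [hp, LinearEquiv.apply_symm_apply] at h2
      have h3 := congrArg φ h2
      simp only [LinearEquiv.apply_symm_apply, map_zero] at h3
      exact (Prod.ext_iff.1 h3).1
    rw [key m1, key m2]
  · -- v = e : p = id, N is trivial
    right
    have hpid : ∀ x : Pmod m i, p x = x := by
      intro x
      apply Subtype.ext
      rw [hpx, h1, elt_eq]
    refine ⟨fun n1 n2 => ?_⟩
    have key : ∀ nn : N, nn = 0 := by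
      intro nn
      have h2 := hpid (φ.symm (0, nn))
      rw [hp, LinearEquiv.apply_symm_apply] at h2
      have h3 := congrArg φ h2
      simp only [LinearEquiv.apply_symm_apply] at h3
      have h4 : (((0 : M), nn).1, (0 : N)) = ((0 : M), nn) := h3
      exact ((Prod.ext_iff.1 h4).2).symm
    rw [key n1, key n2]

end Zig
end

theorem stmt11 (m : ℕ) (hm : 1 ≤ m) (i : ℕ) (hi : i ≤ m) :
    Module.Projective (Am m) (Pmod m i) ∧
    Nontrivial (Pmod m i) ∧
    (∀ (M N : Type) [AddCommGroup M] [Module (Am m) M] [AddCommGroup N] [Module (Am m) N],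
      Nonempty ((Pmod m i) ≃ₗ[Am m] M × N) → (Subsingleton M ∨ Subsingleton N)) := by
  refine ⟨Zig.proj_P, Zig.nontriv_P hm hi, ?_⟩
  intro M N _ _ _ _ ⟨φ⟩
  exact Zig.indec_P hm hi M N φ
end

section
/- Let F be a field and set A_m^F = A_m ⊗_ℤ F, a finite-dimensional F-algebra. For every 1 ≤ i ≤ m, the left A_m^F-module P_i^F = A_m^F·(i) is injective as a left A_m^F-module (as well as projective). -/
noncomputable section

open scoped TensorProduct

set_option synthInstance.maxHeartbeats 1000000
set_option maxHeartbeats 1000000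

/-- The base change `A_m^F = A_m ⊗_ℤ F` of `A_m` to a field `F`. -/
def AmF (m : ℕ) (F : Type) [Field F] : Type := Am m ⊗[ℤ] F

instance (m : ℕ) (F : Type) [Field F] : Ring (AmF m F) :=
  (Algebra.TensorProduct.instRing : Ring (Am m ⊗[ℤ] F))

instance (m : ℕ) (F : Type) [Field F] : AddCommGroup (AmF m F) :=
  inferInstanceAs (AddCommGroup (Am m ⊗[ℤ] F))

/-- The element `(i) ⊗ 1` of `A_m^F`. -/
def eAF (m : ℕ) (F : Type) [Field F] (i : ℕ) : AmF m F :=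
  (eA m i ⊗ₜ[ℤ] (1 : F) : Am m ⊗[ℤ] F)

/-- The left `A_m^F`-module `P_i^F = A_m^F · ((i) ⊗ 1)`. -/
def PmodF (m : ℕ) (F : Type) [Field F] (i : ℕ) : Submodule (AmF m F) (AmF m F) :=
  Submodule.span (AmF m F) {eAF m F i}

/-!
STATEMENT 12.  Let `F` be a field and `A_m^F = A_m ⊗_ℤ F`, a finite-dimensional
`F`-algebra.  For every `1 ≤ i ≤ m`, the left `A_m^F`-module `P_i^F = A_m^F·(i)` is
injective as a left `A_m^F`-module (as well as projective).
-/
namespace AmAux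

variable {m : ℕ}

lemma relA {x y : FA} (h : AmRel m x y) : toAm m x = toAm m y :=
  RingQuot.mkRingHom_rel h

lemma ee (j : ℕ) : eA m j * eA m j = eA m j := by
  have h := relA (m := m) (AmRel.idem j); rwa [map_mul] at h

lemma eo {j k : ℕ} (h : j ≠ k) : eA m j * eA m k = 0 := by
  have h2 := relA (m := m) (AmRel.orth j k h); rwa [map_mul, map_zero] at h2

lemma ez {j : ℕ} (h : m < j) : eA m j = 0 := by
  have h2 := relA (m := m) (AmRel.e_zero j h); rwa [map_zero] at h2

lemma uz {j : ℕ} (h : m ≤ j) : uA m j = 0 := by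
  have h2 := relA (m := m) (AmRel.u_zero j h); rwa [map_zero] at h2

lemma dz {j : ℕ} (h : m ≤ j) : dA m j = 0 := by
  have h2 := relA (m := m) (AmRel.d_zero j h); rwa [map_zero] at h2

lemma eu (j : ℕ) : eA m j * uA m j = uA m j := by
  have h := relA (m := m) (AmRel.u_src j); rwa [map_mul] at h

lemma ue (j : ℕ) : uA m j * eA m (j + 1) = uA m j := by
  have h := relA (m := m) (AmRel.u_tgt j); rwa [map_mul] at h

lemma ed (j : ℕ) : eA m (j + 1) * dA m j = dA m j := by
  have h := relA (m := m) (AmRel.d_src j); rwa [map_mul] at h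

lemma de (j : ℕ) : dA m j * eA m j = dA m j := by
  have h := relA (m := m) (AmRel.d_tgt j); rwa [map_mul] at h

lemma uu0 (j : ℕ) : uA m j * uA m (j + 1) = 0 := by
  have h := relA (m := m) (AmRel.uu j); rwa [map_mul, map_zero] at h

lemma dd0 (j : ℕ) : dA m (j + 1) * dA m j = 0 := by
  have h := relA (m := m) (AmRel.dd j); rwa [map_mul, map_zero] at h

lemma loops0 {j : ℕ} (h : j + 1 < m) :
    uA m (j + 1) * dA m (j + 1) = dA m j * uA m j := by
  have h2 := relA (m := m) (AmRel.loops j h); rwa [map_mul, map_mul] at h2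

lemma loop0 : uA m 0 * dA m 0 = 0 := by
  have h2 := relA (m := m) AmRel.loop0; rwa [map_mul, map_zero] at h2

-- derived endpoint lemmas
lemma eu' {j k : ℕ} (h : j ≠ k) : eA m j * uA m k = 0 := by
  rw [← eu k, ← mul_assoc, eo h, zero_mul]

lemma ue' {j k : ℕ} (h : j + 1 ≠ k) : uA m j * eA m k = 0 := by
  rw [← ue j, mul_assoc, eo h, mul_zero]

lemma ed' {j k : ℕ} (h : j ≠ k + 1) : eA m j * dA m k = 0 := by
  rw [← ed k, ← mul_assoc, eo h, zero_mul]

lemma de' {j k : ℕ} (h : j ≠ k) : dA m j * eA m k = 0 := by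
  rw [← de j, mul_assoc, eo h, mul_zero]

lemma uuA (j k : ℕ) : uA m j * uA m k = 0 := by
  rcases eq_or_ne k (j + 1) with rfl | h
  · exact uu0 j
  · rw [← eu k, ← mul_assoc, ue' (Ne.symm h), zero_mul]

lemma ddA (j k : ℕ) : dA m j * dA m k = 0 := by
  rcases eq_or_ne j (k + 1) with rfl | h
  · exact dd0 k
  · rw [← ed k, ← mul_assoc, de' h, zero_mul]

lemma ud' {j k : ℕ} (h : j ≠ k) : uA m j * dA m k = 0 := by
  rw [← ed k, ← mul_assoc, ue' (by omega), zero_mul]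

lemma du' {j k : ℕ} (h : j ≠ k) : dA m j * uA m k = 0 := by
  rw [← eu k, ← mul_assoc, de' h, zero_mul]

lemma ue2 {j k : ℕ} (h : j + 1 = k) : uA m j * eA m k = uA m j := by
  subst h; exact ue j

lemma ed2 {j k : ℕ} (h : k + 1 = j) : eA m j * dA m k = dA m k := by
  subst h; exact ed k

lemma udl {j : ℕ} (h1 : 1 ≤ j) (h2 : j < m) :
    uA m j * dA m j = dA m (j - 1) * uA m (j - 1) := by
  have h3 := loops0 (m := m) (j := j - 1) (by omega)
  have h4 : j - 1 + 1 = j := by omega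
  rwa [h4] at h3

variable {i : ℕ}

lemma loopA_def : loopA m i = dA m (i - 1) * uA m (i - 1) := rfl

lemma LE (hi1 : 1 ≤ i) : loopA m i * eA m i = loopA m i := by
  rw [loopA_def, mul_assoc, ue2 (by omega)]

lemma LE' {j : ℕ} (hi1 : 1 ≤ i) (h : j ≠ i) : loopA m i * eA m j = 0 := by
  rw [loopA_def, mul_assoc, ue' (by omega), mul_zero]

lemma EL (hi1 : 1 ≤ i) : eA m i * loopA m i = loopA m i := by
  rw [loopA_def, ← mul_assoc, ed2 (by omega)]

lemma EL' {j : ℕ} (hi1 : 1 ≤ i) (h : j ≠ i) : eA m j * loopA m i = 0 := by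
  rw [loopA_def, ← mul_assoc, ed' (by omega), zero_mul]

lemma LU (j : ℕ) : loopA m i * uA m j = 0 := by
  rw [loopA_def, mul_assoc, uuA, mul_zero]

lemma DL (j : ℕ) : dA m j * loopA m i = 0 := by
  rw [loopA_def, ← mul_assoc, ddA, zero_mul]

lemma UL (hi1 : 1 ≤ i) (hi : i ≤ m) (j : ℕ) : uA m j * loopA m i = 0 := by
  rcases eq_or_ne j (i - 1) with rfl | h
  · rw [loopA_def, ← mul_assoc]
    rcases eq_or_ne i 1 with rfl | h1
    · norm_num [loop0]
    · rw [udl (by omega) (by omega), mul_assoc, uuA, mul_zero]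
  · rw [loopA_def, ← mul_assoc, ud' h, zero_mul]

lemma LD (hi1 : 1 ≤ i) (hi : i ≤ m) (j : ℕ) : loopA m i * dA m j = 0 := by
  rcases eq_or_ne j (i - 1) with rfl | h
  · rw [loopA_def, mul_assoc]
    rcases eq_or_ne i 1 with rfl | h1
    · norm_num [loop0]
    · rw [udl (by omega) (by omega), ← mul_assoc, ddA, zero_mul]
  · rw [loopA_def, mul_assoc, ud' (by omega), mul_zero]

lemma UDi (hi1 : 1 ≤ i) (h2 : i < m) : uA m i * dA m i = loopA m i := by
  rw [udl hi1 h2, loopA_def]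

end AmAux
namespace AmAux



variable (m : ℕ) (F : Type) [Field F] (i : ℕ)

/-- vertex assignment for the 4 coordinates of the representation -/
def vv (a : Fin 4) : ℕ :=
  if a = 1 then i - 1 else if a = 2 then (if i < m then i + 1 else 0) else i

def ρe (j : ℕ) : Matrix (Fin 4) (Fin 4) F :=
  Matrix.of fun a b => if a = b then (if j = vv m i a then (1 : F) else 0) else 0

def ρu (j : ℕ) : Matrix (Fin 4) (Fin 4) F :=
  Matrix.of fun a b =>
    if j = i - 1 ∧ a = 1 ∧ b = 0 then (1 : F)
    else if j = i ∧ i < m ∧ a = 3 ∧ b = 2 then 1 else 0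

def ρd (j : ℕ) : Matrix (Fin 4) (Fin 4) F :=
  Matrix.of fun a b =>
    if j = i ∧ i < m ∧ a = 2 ∧ b = 0 then (1 : F)
    else if j = i - 1 ∧ a = 3 ∧ b = 1 then 1 else 0

def ρgen : AmGen → Matrix (Fin 4) (Fin 4) F
  | .e j => ρe m F i j
  | .u j => ρu m F i j
  | .d j => ρd m F i j

def ρFA : FA →+* Matrix (Fin 4) (Fin 4) F :=
  (FreeAlgebra.lift ℤ (ρgen m F i)).toRingHom

lemma ρFA_ge (j : ℕ) : ρFA m F i (ge j) = ρe m F i j := by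
  simp [ρFA, ge, ρgen]

lemma ρFA_gu (j : ℕ) : ρFA m F i (gu j) = ρu m F i j := by
  simp [ρFA, gu, ρgen]

lemma ρFA_gd (j : ℕ) : ρFA m F i (gd j) = ρd m F i j := by
  simp [ρFA, gd, ρgen]

lemma ρ_rel (hi1 : 1 ≤ i) (hi : i ≤ m) {x y : FA} (h : AmRel m x y) :
    ρFA m F i x = ρFA m F i y := by
  induction h with
  | idem j =>
      simp only [_root_.map_mul, ρFA_ge]
      ext a b
      fin_cases a <;> fin_cases b <;>
        simp [ρe, Matrix.mul_apply, Fin.sum_univ_four, vv] <;>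
        (try split_ifs) <;> first | rfl | omega | norm_num
  | orth j k hjk =>
      simp only [_root_.map_mul, map_zero, ρFA_ge]
      ext a b
      fin_cases a <;> fin_cases b <;>
        simp [ρe, Matrix.mul_apply, Fin.sum_univ_four, vv] <;>
        (try split_ifs) <;> first | rfl | omega | norm_num
  | sum_one =>
      simp only [map_sum, _root_.map_one, ρFA_ge]
      ext a b
      rw [Matrix.sum_apply]
      by_cases hab : a = b
      · subst hab
        have hv : vv m i a ∈ Finset.range (m + 1) := by
          fin_cases a <;> simp [vv] <;> (try split_ifs) <;> omega
        simp [ρe, Finset.sum_ite_eq', hv, Matrix.one_apply]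
      · simp [ρe, Matrix.one_apply, hab]
  | e_zero j hj =>
      simp only [map_zero, ρFA_ge]
      ext a b
      fin_cases a <;> fin_cases b <;>
        simp [ρe, vv] <;> (try split_ifs) <;> first | rfl | omega | norm_num
  | u_zero j hj =>
      simp only [map_zero, ρFA_gu]
      ext a b
      fin_cases a <;> fin_cases b <;>
        simp [ρu] <;> (try split_ifs) <;> first | rfl | omega | norm_num
  | d_zero j hj =>
      simp only [map_zero, ρFA_gd]
      ext a b
      fin_cases a <;> fin_cases b <;>
        simp [ρd] <;> (try split_ifs) <;> first | rfl | omega | norm_num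
  | u_src j =>
      simp only [_root_.map_mul, ρFA_ge, ρFA_gu]
      ext a b
      fin_cases a <;> fin_cases b <;>
        simp [ρe, ρu, Matrix.mul_apply, Fin.sum_univ_four, vv] <;>
        (try split_ifs) <;> first | rfl | omega | norm_num
  | u_tgt j =>
      simp only [_root_.map_mul, ρFA_ge, ρFA_gu]
      ext a b
      fin_cases a <;> fin_cases b <;>
        simp [ρe, ρu, Matrix.mul_apply, Fin.sum_univ_four, vv] <;>
        (try split_ifs) <;> first | rfl | omega | norm_num
  | d_src j =>
      simp only [_root_.map_mul, ρFA_ge, ρFA_gd]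
      ext a b
      fin_cases a <;> fin_cases b <;>
        simp [ρe, ρd, Matrix.mul_apply, Fin.sum_univ_four, vv] <;>
        (try split_ifs) <;> first | rfl | omega | norm_num
  | d_tgt j =>
      simp only [_root_.map_mul, ρFA_ge, ρFA_gd]
      ext a b
      fin_cases a <;> fin_cases b <;>
        simp [ρe, ρd, Matrix.mul_apply, Fin.sum_univ_four, vv] <;>
        (try split_ifs) <;> first | rfl | omega | norm_num
  | uu j =>
      simp only [_root_.map_mul, map_zero, ρFA_gu]
      ext a b
      fin_cases a <;> fin_cases b <;>
        simp [ρu, Matrix.mul_apply, Fin.sum_univ_four] <;>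
        (try split_ifs) <;> first | rfl | omega | norm_num
  | dd j =>
      simp only [_root_.map_mul, map_zero, ρFA_gd]
      ext a b
      fin_cases a <;> fin_cases b <;>
        simp [ρd, Matrix.mul_apply, Fin.sum_univ_four] <;>
        (try split_ifs) <;> first | rfl | omega | norm_num
  | loops j hjm =>
      simp only [_root_.map_mul, ρFA_gu, ρFA_gd]
      ext a b
      fin_cases a <;> fin_cases b <;>
        simp [ρu, ρd, Matrix.mul_apply, Fin.sum_univ_four] <;>
        (try split_ifs) <;> first | rfl | omega | norm_num
  | loop0 =>
      simp only [_root_.map_mul, map_zero, ρFA_gu, ρFA_gd]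
      ext a b
      fin_cases a <;> fin_cases b <;>
        simp [ρu, ρd, Matrix.mul_apply, Fin.sum_univ_four] <;>
        (try split_ifs) <;> first | rfl | omega | norm_num

end AmAux
namespace AmAux

variable (m : ℕ) (F : Type) [Field F] (i : ℕ)

instance instAlgAmF : Algebra F (AmF m F) :=
  Algebra.TensorProduct.rightAlgebra (R := ℤ) (A := Am m) (B := F)

instance instNUNASAmF : NonUnitalNonAssocSemiring (AmF m F) :=
  (Ring.toSemiring (R := AmF m F)).toNonAssocSemiring.toNonUnitalNonAssocSemiring

/-- the ring map `A_m → A_m ⊗ F`. -/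
def κ : Am m →+* AmF m F :=
  Algebra.TensorProduct.includeLeftRingHom (R := ℤ) (A := Am m) (B := F)

lemma κ_apply (x : Am m) : κ m F x = (x ⊗ₜ[ℤ] (1 : F) : Am m ⊗[ℤ] F) := rfl

lemma algebraMap_AmF (f : F) :
    algebraMap F (AmF m F) f = ((1 : Am m) ⊗ₜ[ℤ] f : Am m ⊗[ℤ] F) := rfl

/-- pure tensors as elements of `AmF`. -/
def tm (x : Am m) (g : F) : AmF m F := (x ⊗ₜ[ℤ] g : Am m ⊗[ℤ] F)

lemma smul_tm (f : F) (x : Am m) (g : F) : f • tm m F x g = tm m F x (f * g) := by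
  rw [Algebra.smul_def]
  show ((1 : Am m) ⊗ₜ[ℤ] f : Am m ⊗[ℤ] F) * (x ⊗ₜ[ℤ] g) = x ⊗ₜ[ℤ] (f * g)
  rw [Algebra.TensorProduct.tmul_mul_tmul, one_mul]

/-- the representation of `A_m` on `F^4`. -/
def ρAm (hi1 : 1 ≤ i) (hi : i ≤ m) : Am m →+* Matrix (Fin 4) (Fin 4) F :=
  RingQuot.lift ⟨ρFA m F i, fun _ _ h => ρ_rel m F i hi1 hi h⟩

variable (hi1 : 1 ≤ i) (hi : i ≤ m)

lemma ρAm_e (j : ℕ) : ρAm m F i hi1 hi (eA m j) = ρe m F i j := by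
  show ρAm m F i hi1 hi (RingQuot.mkRingHom (AmRel m) (ge j)) = _
  rw [ρAm, RingQuot.lift_mkRingHom_apply, ρFA_ge]

lemma ρAm_u (j : ℕ) : ρAm m F i hi1 hi (uA m j) = ρu m F i j := by
  show ρAm m F i hi1 hi (RingQuot.mkRingHom (AmRel m) (gu j)) = _
  rw [ρAm, RingQuot.lift_mkRingHom_apply, ρFA_gu]

lemma ρAm_d (j : ℕ) : ρAm m F i hi1 hi (dA m j) = ρd m F i j := by
  show ρAm m F i hi1 hi (RingQuot.mkRingHom (AmRel m) (gd j)) = _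
  rw [ρAm, RingQuot.lift_mkRingHom_apply, ρFA_gd]

/-- auxiliary `ℤ`-bilinear map used to define the functional `ψ`. -/
def μfun : Am m →ₗ[ℤ] F →ₗ[ℤ] F where
  toFun a := (ρAm m F i hi1 hi a 3 0) • (LinearMap.id (R := ℤ) (M := F))
  map_add' a b := by
    simp only [map_add, Matrix.add_apply]
    rw [add_smul]
  map_smul' n a := by
    simp only [map_zsmul, Matrix.smul_apply, RingHom.id_apply]
    rw [smul_assoc]

/-- the `F`-linear functional on `A_m ⊗ F` computing the coefficient of the loop at `i`. -/
def ψ : AmF m F →ₗ[F] F where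
  toFun := TensorProduct.lift (μfun m F i hi1 hi)
  map_add' x y := map_add _ x y
  map_smul' f x := by
    simp only [RingHom.id_apply, smul_eq_mul]
    induction x using TensorProduct.induction_on with
    | zero =>
        calc _ = TensorProduct.lift (μfun m F i hi1 hi) (0 : Am m ⊗[ℤ] F) :=
              congrArg (TensorProduct.lift (μfun m F i hi1 hi)) (smul_zero f : f • (0 : AmF m F) = 0)
          _ = _ := by rw [map_zero, mul_zero]
    | tmul a g =>
        show TensorProduct.lift (μfun m F i hi1 hi) (f • tm m F a g)
            = f * TensorProduct.lift (μfun m F i hi1 hi) (tm m F a g)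
        rw [smul_tm]
        simp only [tm, TensorProduct.lift.tmul, μfun, LinearMap.coe_mk, AddHom.coe_mk,
          LinearMap.smul_apply, LinearMap.id_apply, smul_eq_mul]
        ring
    | add x y hx hy =>
        calc _ = TensorProduct.lift (μfun m F i hi1 hi) (@HSMul.hSMul F (AmF m F) (AmF m F) _ f x)
                + TensorProduct.lift (μfun m F i hi1 hi) (@HSMul.hSMul F (AmF m F) (AmF m F) _ f y) :=
              (congrArg (TensorProduct.lift (μfun m F i hi1 hi))
                (smul_add (A := AmF m F) f x y)).trans
                ((TensorProduct.lift (μfun m F i hi1 hi)).map_add _ _)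
          _ = _ := by rw [hx, hy, map_add, mul_add]

lemma ψ_κ (x : Am m) : ψ m F i hi1 hi (κ m F x) = ρAm m F i hi1 hi x 3 0 := by
  rw [κ_apply]
  show TensorProduct.lift (μfun m F i hi1 hi) (x ⊗ₜ[ℤ] 1) = _
  simp [μfun]

lemma ψ_L : ψ m F i hi1 hi (κ m F (loopA m i)) = 1 := by
  rw [ψ_κ, loopA_def, _root_.map_mul, ρAm_d, ρAm_u]
  simp [ρd, ρu, Matrix.mul_apply, Fin.sum_univ_four]

lemma ψ_E : ψ m F i hi1 hi (κ m F (eA m i)) = 0 := by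
  rw [ψ_κ, ρAm_e]
  simp [ρe]

end AmAux
namespace AmAux

variable (m : ℕ) (F : Type) [Field F] (i : ℕ)

lemma eAF_eq : eAF m F i = κ m F (eA m i) := rfl

/-- the key "Casimir" property of an element `a` of `A_m ⊗ F`. -/
def Skey (a : AmF m F) : Prop :=
  ∀ φ : AmF m F →ₗ[F] F,
    φ (κ m F (loopA m i) * a) • κ m F (eA m i)
      + φ (κ m F (dA m (i - 1)) * a) • κ m F (uA m (i - 1))
      + φ (κ m F (uA m i) * a) • κ m F (dA m i)
      + φ (κ m F (eA m i) * a) • κ m F (loopA m i)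
    = a * (φ (κ m F (loopA m i)) • κ m F (eA m i)
      + φ (κ m F (dA m (i - 1))) • κ m F (uA m (i - 1))
      + φ (κ m F (uA m i)) • κ m F (dA m i)
      + φ (κ m F (eA m i)) • κ m F (loopA m i))

lemma skey_zero : Skey m F i 0 := by intro φ; simp

lemma skey_add {x y : AmF m F} (hx : Skey m F i x) (hy : Skey m F i y) :
    Skey m F i (x + y) := by
  intro φ
  rw [add_mul, ← hx φ, ← hy φ]
  simp only [mul_add, map_add, add_smul]
  abel

lemma skey_mul {x y : AmF m F} (hx : Skey m F i x) (hy : Skey m F i y) :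
    Skey m F i (x * y) := by
  intro φ
  have h1 := hx (φ.comp (LinearMap.mulRight F y))
  have h2 := hy φ
  simp only [LinearMap.comp_apply, LinearMap.mulRight_apply] at h1
  simp only [← mul_assoc]
  rw [h1, h2, mul_assoc]

lemma skey_alg (f : F) : Skey m F i (algebraMap F (AmF m F) f) := by
  intro φ
  have hb : ∀ b : AmF m F, b * algebraMap F (AmF m F) f = f • b := fun b => by
    rw [← Algebra.commutes, ← Algebra.smul_def]
  simp only [hb, map_smul, smul_eq_mul]
  rw [← Algebra.smul_def]
  simp only [smul_add, smul_smul]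

variable (hi1 : 1 ≤ i) (hi : i ≤ m)
include hi1 hi

lemma key_e (j : ℕ) : Skey m F i (κ m F (eA m j)) := by
  intro φ
  simp only [mul_add, mul_smul_comm, ← _root_.map_mul]
  rcases eq_or_ne j i with hh | hji
  · rw [hh, LE hi1, de' (show i - 1 ≠ i by omega), ue' (show i + 1 ≠ i by omega), ee,
      eu' (show i ≠ i - 1 by omega), ed' (show i ≠ i + 1 by omega), EL hi1]
    simp
  · rcases eq_or_ne j (i - 1) with hh | h2
    · rw [hh, LE' hi1 (show i - 1 ≠ i by omega), de (i - 1), ue' (show i + 1 ≠ i - 1 by omega),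
        eo (show i ≠ i - 1 by omega), eo (show i - 1 ≠ i by omega), eu (i - 1),
        ed' (show i - 1 ≠ i + 1 by omega), EL' hi1 (show i - 1 ≠ i by omega)]
      simp
    · rcases eq_or_ne j (i + 1) with hh | h3
      · rw [hh, LE' hi1 (show i + 1 ≠ i by omega), de' (show i - 1 ≠ i + 1 by omega), ue i,
          eo (show i ≠ i + 1 by omega), eo (show i + 1 ≠ i by omega), eu' (show i + 1 ≠ i - 1 by omega),
          ed i, EL' hi1 (show i + 1 ≠ i by omega)]
        simp
      · rw [LE' hi1 hji, de' (show i - 1 ≠ j by omega), ue' (show i + 1 ≠ j by omega),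
          eo (show i ≠ j by omega), eo hji, eu' h2, ed' h3,
          EL' hi1 hji]
        simp

lemma key_u (j : ℕ) : Skey m F i (κ m F (uA m j)) := by
  intro φ
  simp only [mul_add, mul_smul_comm, ← _root_.map_mul]
  rcases eq_or_ne j (i - 1) with hh | h1
  · rw [hh, LU, ← loopA_def, ue2 (show i - 1 + 1 = i by omega),
      ud' (show i - 1 ≠ i by omega), UL hi1 hi, eu' (show i ≠ i - 1 by omega)]
    simp only [uuA]
    simp
  · rcases eq_or_ne j i with hh | h2
    · rcases Nat.lt_or_ge i m with hlt | hge
      · rw [hh, LU, du' (show i - 1 ≠ i by omega), eu i, ue' (show i + 1 ≠ i by omega),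
          UDi hi1 hlt, UL hi1 hi]
        simp only [uuA]
        simp
      · have hu0 : uA m i = 0 := uz hge
        rw [hh, hu0]
        simp
    · rw [LU, du' (show i - 1 ≠ j from by omega), eu' (show i ≠ j from h2.symm),
        ue' (show j + 1 ≠ i by omega), ud' (show j ≠ i from h2), UL hi1 hi]
      simp only [uuA]
      simp

lemma key_d (j : ℕ) : Skey m F i (κ m F (dA m j)) := by
  intro φ
  simp only [mul_add, mul_smul_comm, ← _root_.map_mul]
  rcases eq_or_ne j (i - 1) with hh | h1
  · rw [hh, LD hi1 hi, ud' (show i ≠ i - 1 by omega), ed2 (show i - 1 + 1 = i by omega),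
      de' (show i - 1 ≠ i by omega), ← loopA_def, DL]
    simp only [ddA]
    simp
  · rcases eq_or_ne j i with hh | h2
    · rcases Nat.lt_or_ge i m with hlt | hge
      · rw [hh, LD hi1 hi, UDi hi1 hlt, ed' (show i ≠ i + 1 by omega), de i,
          du' (show i ≠ i - 1 by omega), DL]
        simp only [ddA]
        simp
      · have hd0 : dA m i = 0 := dz hge
        rw [hh, hd0]
        simp
    · rw [LD hi1 hi, ud' (show i ≠ j from h2.symm), ed' (show i ≠ j + 1 by omega),
        de' h2, du' (show j ≠ i - 1 from h1), DL]
      simp only [ddA]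
      simp

lemma skey_all (a : AmF m F) : Skey m F i a := by
  have hκ : ∀ x : Am m, Skey m F i (κ m F x) := by
    intro x
    obtain ⟨y, rfl⟩ := RingQuot.mkRingHom_surjective (AmRel m) x
    induction y using FreeAlgebra.induction with
    | grade0 n =>
        have h0 : (κ m F) (RingQuot.mkRingHom (AmRel m) (algebraMap ℤ FA n))
            = algebraMap F (AmF m F) (n : F) := by
          have h1 : (algebraMap ℤ FA) n = ((n : ℤ) : FA) := by
            exact eq_intCast _ n
          rw [h1, map_intCast, map_intCast, map_intCast]
        rw [h0]
        exact skey_alg m F i ((n : ℤ) : F)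
    | grade1 g =>
        cases g with
        | e j => exact key_e m F i hi1 hi j
        | u j => exact key_u m F i hi1 hi j
        | d j => exact key_d m F i hi1 hi j
    | mul x y hx hy =>
        rw [_root_.map_mul, _root_.map_mul]
        exact skey_mul m F i hx hy
    | add x y hx hy =>
        rw [map_add, map_add]
        exact skey_add m F i hx hy
  induction a using TensorProduct.induction_on with
  | zero => exact skey_zero m F i
  | tmul x f =>
      have hx : (x ⊗ₜ[ℤ] f : Am m ⊗[ℤ] F) = κ m F x * algebraMap F (AmF m F) f := by
        rw [κ_apply, algebraMap_AmF]
        show (x ⊗ₜ[ℤ] f : Am m ⊗[ℤ] F)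
          = (x ⊗ₜ[ℤ] (1 : F) : Am m ⊗[ℤ] F) * ((1 : Am m) ⊗ₜ[ℤ] f : Am m ⊗[ℤ] F)
        rw [Algebra.TensorProduct.tmul_mul_tmul, mul_one, one_mul]
      rw [hx]
      exact skey_mul m F i (hκ x) (skey_alg m F i f)
  | add x y hx hy => exact skey_add m F i hx hy

lemma Tfix (p : AmF m F) (hp : p ∈ PmodF m F i) :
    ψ m F i hi1 hi (κ m F (loopA m i) * p) • κ m F (eA m i)
      + ψ m F i hi1 hi (κ m F (dA m (i - 1)) * p) • κ m F (uA m (i - 1))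
      + ψ m F i hi1 hi (κ m F (uA m i) * p) • κ m F (dA m i)
      + ψ m F i hi1 hi (κ m F (eA m i) * p) • κ m F (loopA m i)
    = p := by
  obtain ⟨r, rfl⟩ := Submodule.mem_span_singleton.mp hp
  have hK := skey_all m F i hi1 hi r
    ((ψ m F i hi1 hi).comp (LinearMap.mulRight F (κ m F (eA m i))))
  simp only [LinearMap.comp_apply, LinearMap.mulRight_apply] at hK
  rw [smul_eq_mul, eAF_eq]
  simp only [← mul_assoc]
  rw [hK]
  congr 1
  simp only [← _root_.map_mul]
  rw [LE hi1, de' (show i - 1 ≠ i by omega), ue' (show i + 1 ≠ i by omega), ee]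
  simp [ψ_L m F i hi1 hi, ψ_E m F i hi1 hi]

end AmAux
theorem stmt12 (m : ℕ) (hm : 1 ≤ m) (F : Type) [Field F] (i : ℕ) (hi1 : 1 ≤ i)
    (hi : i ≤ m) :
    Module.Injective (AmF m F) (PmodF m F i) ∧
    Module.Projective (AmF m F) (PmodF m F i) := by
  classical
  have he : AmAux.κ m F (eA m i) ∈ PmodF m F i := by
    rw [← AmAux.eAF_eq]; exact Submodule.mem_span_singleton_self _
  have hu : AmAux.κ m F (uA m (i - 1)) ∈ PmodF m F i :=
    Submodule.mem_span_singleton.mpr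
      ⟨AmAux.κ m F (uA m (i - 1)), by
        rw [smul_eq_mul, AmAux.eAF_eq, ← _root_.map_mul,
          AmAux.ue2 (show i - 1 + 1 = i by omega)]⟩
  have hd : AmAux.κ m F (dA m i) ∈ PmodF m F i :=
    Submodule.mem_span_singleton.mpr
      ⟨AmAux.κ m F (dA m i), by
        rw [smul_eq_mul, AmAux.eAF_eq, ← _root_.map_mul, AmAux.de i]⟩
  have hL : AmAux.κ m F (loopA m i) ∈ PmodF m F i :=
    Submodule.mem_span_singleton.mpr
      ⟨AmAux.κ m F (loopA m i), by
        rw [smul_eq_mul, AmAux.eAF_eq, ← _root_.map_mul, AmAux.LE hi1]⟩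
  constructor
  · apply Module.Baer.injective
    intro I g
    letI : @Module F (AmF m F) _ (AddCommGroup.toAddCommMonoid : AddCommMonoid (AmF m F)) :=
      @Algebra.toModule F (AmF m F) _ _ (AmAux.instAlgAmF m F)
    obtain ⟨W, hW⟩ := Submodule.exists_isCompl (I.restrictScalars F)
    let pr : AmF m F →ₗ[F] (I.restrictScalars F) :=
      Submodule.linearProjOfIsCompl _ W hW
    let gF : ↥I →ₗ[F] AmF m F :=
      LinearMap.restrictScalars F ((PmodF m F i).subtype.comp g)
    let eI : (I.restrictScalars F) →ₗ[F] ↥I :=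
      LinearMap.restrictScalars F (Submodule.restrictScalarsEquiv F _ _ I).toLinearMap
    let f : AmF m F →ₗ[F] F :=
      ((AmAux.ψ m F i hi1 hi).comp gF).comp (eI.comp pr)
    have hf : ∀ (x : AmF m F) (hx : x ∈ I),
        f x = AmAux.ψ m F i hi1 hi ((g ⟨x, hx⟩ : PmodF m F i) : AmF m F) := by
      intro x hx
      have hxV : x ∈ I.restrictScalars F := hx
      have h1 : pr x = ⟨x, hxV⟩ :=
        Submodule.linearProjOfIsCompl_apply_left hW ⟨x, hxV⟩
      simp only [f, LinearMap.comp_apply, h1]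
      rfl
    refine ⟨{
        toFun := fun a =>
          f (AmAux.κ m F (loopA m i) * a) • (⟨AmAux.κ m F (eA m i), he⟩ : PmodF m F i)
          + f (AmAux.κ m F (dA m (i - 1)) * a) • ⟨AmAux.κ m F (uA m (i - 1)), hu⟩
          + f (AmAux.κ m F (uA m i) * a) • ⟨AmAux.κ m F (dA m i), hd⟩
          + f (AmAux.κ m F (eA m i) * a) • ⟨AmAux.κ m F (loopA m i), hL⟩
        map_add' := by
          intro a b
          simp only [mul_add, map_add, add_smul]
          abel
        map_smul' := by
          intro r a
          have hK := AmAux.skey_all m F i hi1 hi r (f.comp (LinearMap.mulRight F a))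
          simp only [LinearMap.comp_apply, LinearMap.mulRight_apply] at hK
          apply Subtype.ext
          simp only [RingHom.id_apply, Submodule.coe_add, SetLike.val_smul, smul_eq_mul]
          simp only [← mul_assoc]
          exact hK }, ?_⟩
    intro x mem
    apply Subtype.ext
    have hbx : ∀ b : AmF m F, b * x ∈ I := fun b => I.smul_mem b mem
    have hgx : ∀ (b : AmF m F) (hb : b * x ∈ I),
        ((g ⟨b * x, hb⟩ : PmodF m F i) : AmF m F)
          = b * ((g ⟨x, mem⟩ : PmodF m F i) : AmF m F) := by
      intro b hb
      have h2 : (⟨b * x, hb⟩ : ↥I) = b • (⟨x, mem⟩ : ↥I) := Subtype.ext rfl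
      rw [h2, map_smul]
      rfl
    show _ = ((g ⟨x, mem⟩ : PmodF m F i) : AmF m F)
    simp only [LinearMap.coe_mk, AddHom.coe_mk, Submodule.coe_add, SetLike.val_smul,
      smul_eq_mul]
    rw [hf _ (hbx _), hf _ (hbx _), hf _ (hbx _), hf _ (hbx _),
      hgx _ (hbx _), hgx _ (hbx _), hgx _ (hbx _), hgx _ (hbx _)]
    exact AmAux.Tfix m F i hi1 hi _ (g ⟨x, mem⟩).2
  · refine Module.Projective.of_split (Submodule.subtype _)
      ({ toFun := fun a =>
            ⟨a * AmAux.κ m F (eA m i),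
              Submodule.mem_span_singleton.mpr ⟨a, by rw [smul_eq_mul, AmAux.eAF_eq]⟩⟩
         map_add' := fun a b => Subtype.ext (add_mul a b _)
         map_smul' := fun r a => Subtype.ext (mul_assoc r a _) }) ?_
    ext x
    obtain ⟨r, hr⟩ := Submodule.mem_span_singleton.mp x.2
    show (x : AmF m F) * AmAux.κ m F (eA m i) = (x : AmF m F)
    rw [← hr, smul_eq_mul, AmAux.eAF_eq, mul_assoc, ← _root_.map_mul, AmAux.ee]
end
end
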